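/- arXiv:1112.6156 — 3 statements merged into one kernel-verified Lean document; each statement's English description precedes it below -/
import Mathlib

section
/- Let n ≥ 2 and let A : ℝⁿ \ {0} → ℂ be a smooth function which is positively homogeneous of degree 1−n. Then for every ℓ ∈ {1, …, n}, the integral over the unit sphere of the ℓ-th partial derivative of A vanishes: ∫_{S^{n−1}} (∂_{ξ_ℓ} A)(ξ) dΩ(ξ) = 0, where dΩ is the surface measure on the unit sphere S^{n−1} ⊂ ℝⁿ. -/
open MeasureTheory Real Set Metric Module

set_option maxHeartbeats 1000000

lemma polar_integral {n : ℕ} (hn : 1 ≤ n) (f : EuclideanSpace ℝ (Fin n) → ℂ)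
    (u : ℝ → ℂ) (w : Metric.sphere (0 : EuclideanSpace ℝ (Fin n)) 1 → ℂ)
    (hfu : ∀ r : ℝ, 0 < r → ∀ ω : Metric.sphere (0 : EuclideanSpace ℝ (Fin n)) 1,
      f (r • (ω : EuclideanSpace ℝ (Fin n))) = u r * w ω) :
    ∫ x, f x = (∫ ω, w ω ∂(volume : Measure (EuclideanSpace ℝ (Fin n))).toSphere)
      * ∫ r in Set.Ioi (0:ℝ), (r ^ (n-1)) • u r := by
  haveI : Nonempty (Fin n) := ⟨⟨0, by omega⟩⟩
  have hE : True := trivial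
  have hdim : finrank ℝ (EuclideanSpace ℝ (Fin n)) = n := finrank_euclideanSpace_fin
  calc ∫ x, f x ∂(volume : Measure (EuclideanSpace ℝ (Fin n)))
      = ∫ x, f x ∂((volume : Measure (EuclideanSpace ℝ (Fin n))).restrict {(0:EuclideanSpace ℝ (Fin n))}ᶜ) := by
        rw [MeasureTheory.restrict_compl_singleton]
    _ = ∫ x : ({(0:EuclideanSpace ℝ (Fin n))}ᶜ : Set (EuclideanSpace ℝ (Fin n))), f x ∂((volume : Measure (EuclideanSpace ℝ (Fin n))).comap Subtype.val) := by
        rw [MeasureTheory.integral_subtype_comap (measurableSet_singleton _).compl]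
    _ = ∫ p : Metric.sphere (0:EuclideanSpace ℝ (Fin n)) 1 × Ioi (0:ℝ), (fun p : Metric.sphere (0:EuclideanSpace ℝ (Fin n)) 1 × Ioi (0:ℝ) =>
          f ((p.2 : ℝ) • (p.1 : EuclideanSpace ℝ (Fin n)))) p
          ∂(((volume : Measure (EuclideanSpace ℝ (Fin n))).toSphere).prod (.volumeIoiPow (finrank ℝ (EuclideanSpace ℝ (Fin n)) - 1))) := by
        rw [← (Measure.measurePreserving_homeomorphUnitSphereProd
          (volume : Measure (EuclideanSpace ℝ (Fin n)))).integral_comp (Homeomorph.measurableEmbedding _)]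
        refine integral_congr_ae (Filter.Eventually.of_forall fun x => ?_)
        simp only [homeomorphUnitSphereProd_apply_fst_coe, homeomorphUnitSphereProd_apply_snd_coe]
        congr 1
        rw [smul_smul, mul_inv_cancel₀ (norm_ne_zero_iff.2 x.2), one_smul]
    _ = ∫ p : Metric.sphere (0:EuclideanSpace ℝ (Fin n)) 1 × Ioi (0:ℝ), w p.1 * u (p.2 : ℝ)
          ∂(((volume : Measure (EuclideanSpace ℝ (Fin n))).toSphere).prod (.volumeIoiPow (finrank ℝ (EuclideanSpace ℝ (Fin n)) - 1))) := by
        refine integral_congr_ae (Filter.Eventually.of_forall fun p => ?_)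
        show f ((p.2 : ℝ) • (p.1 : EuclideanSpace ℝ (Fin n))) = w p.1 * u (p.2 : ℝ)
        rw [hfu _ p.2.2, mul_comm]
    _ = (∫ ω, w ω ∂(volume : Measure (EuclideanSpace ℝ (Fin n))).toSphere)
          * ∫ r : Ioi (0:ℝ), u r ∂(Measure.volumeIoiPow (finrank ℝ (EuclideanSpace ℝ (Fin n)) - 1)) :=
        MeasureTheory.integral_prod_mul (fun ω => w ω) (fun r : Ioi (0:ℝ) => u r)
    _ = (∫ ω, w ω ∂(volume : Measure (EuclideanSpace ℝ (Fin n))).toSphere) * ∫ r in Set.Ioi (0:ℝ), (r ^ (n-1)) • u r := by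
        congr 1
        rw [hdim, Measure.volumeIoiPow]
        simp only [ENNReal.ofReal]
        rw [integral_withDensity_eq_integral_smul
          (by exact (measurable_subtype_coe.pow_const _).real_toNNReal)]
        rw [MeasureTheory.integral_subtype_comap measurableSet_Ioi (fun r : ℝ => (r^(n-1)).toNNReal • u r)]
        refine setIntegral_congr_fun measurableSet_Ioi fun r hr => ?_
        rw [NNReal.smul_def, Real.coe_toNNReal _ (pow_nonneg (le_of_lt hr) _)]

noncomputable def myBump : ContDiffBump (3:ℝ) := ⟨1, 2, one_pos, one_lt_two⟩

lemma myBump_zero {s : ℝ} (h : s ≤ 1 ∨ 5 ≤ s) : myBump s = 0 := by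
  apply myBump.zero_of_le_dist
  have : myBump.rOut = 2 := rfl
  rw [this, Real.dist_eq, le_abs]
  rcases h with h | h
  · right; linarith
  · left; linarith

lemma myBump_deriv_zero {s : ℝ} (h : s < 1 ∨ 5 < s) : deriv (myBump : ℝ → ℝ) s = 0 := by
  apply image_eq_zero_of_notMem_tsupport
  intro hs
  have h2 : tsupport (deriv (myBump : ℝ → ℝ)) ⊆ tsupport (myBump : ℝ → ℝ) :=
    closure_minimal support_deriv_subset isClosed_closure
  have h3 := h2 hs
  rw [myBump.tsupport_eq] at h3
  have : myBump.rOut = 2 := rfl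
  rw [mem_closedBall, this, Real.dist_eq, abs_le] at h3
  rcases h with h | h <;> linarith [h3.1, h3.2]

lemma myBump_one {s : ℝ} (h1 : 2 ≤ s) (h2 : s ≤ 4) : myBump s = 1 := by
  apply myBump.one_of_mem_closedBall
  have : myBump.rIn = 1 := rfl
  rw [mem_closedBall, this, Real.dist_eq, abs_le]
  constructor <;> linarith

/-- Let `n ≥ 2` and let `A : ℝⁿ \ {0} → ℂ` be a smooth function which is
positively homogeneous of degree `1 − n`. Then for every `ℓ ∈ {1, …, n}`, the integral
over the unit sphere of the `ℓ`-th partial derivative of `A` vanishes: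
`∫_{S^{n−1}} (∂_{ξ_ℓ} A)(ξ) dΩ(ξ) = 0`. -/
theorem sphere_integral_of_partial_deriv_of_homogeneous_eq_zero
    (n : ℕ) (hn : 2 ≤ n) (A : EuclideanSpace ℝ (Fin n) → ℂ)
    (hA_smooth : ContDiffOn ℝ (⊤ : ℕ∞) A {ξ : EuclideanSpace ℝ (Fin n) | ξ ≠ 0})
    (hA_homog : ∀ (t : ℝ), 0 < t → ∀ (ξ : EuclideanSpace ℝ (Fin n)), ξ ≠ 0 →
      A (t • ξ) = (t : ℂ) ^ ((1 : ℤ) - n) * A ξ)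
    (ℓ : Fin n) :
    ∫ ω : Metric.sphere (0 : EuclideanSpace ℝ (Fin n)) 1,
        fderiv ℝ A (ω : EuclideanSpace ℝ (Fin n)) (EuclideanSpace.single ℓ 1)
      ∂((volume : Measure (EuclideanSpace ℝ (Fin n))).toSphere) = 0 := by
  haveI : Nonempty (Fin n) := ⟨⟨0, by omega⟩⟩
  set v : EuclideanSpace ℝ (Fin n) := EuclideanSpace.single ℓ 1 with hv
  set ψ : ℝ → ℝ := (myBump : ℝ → ℝ) with hψ
  -- differentiability of A away from 0
  have hAdiff : ∀ x : EuclideanSpace ℝ (Fin n), x ≠ 0 → DifferentiableAt ℝ A x := fun x hx =>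
    (hA_smooth.contDiffAt (isOpen_ne.mem_nhds hx)).differentiableAt (by simp)
  have hAcont : ∀ x : EuclideanSpace ℝ (Fin n), x ≠ 0 → ContinuousAt A x := fun x hx =>
    (hAdiff x hx).continuousAt
  have hfdC : ∀ x : EuclideanSpace ℝ (Fin n), x ≠ 0 →
      ContinuousAt (fun y => fderiv ℝ A y v) x := by
    intro x hx
    have h1 : ContinuousOn (fderiv ℝ A) {ξ : EuclideanSpace ℝ (Fin n) | ξ ≠ 0} :=
      hA_smooth.continuousOn_fderiv_of_isOpen isOpen_ne (mod_cast le_top)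
    exact ((ContinuousLinearMap.apply ℝ ℂ v).continuous.continuousAt).comp
      (h1.continuousAt (isOpen_ne.mem_nhds hx))
  -- homogeneity of the derivative
  have hfd_homog : ∀ t : ℝ, 0 < t → ∀ ξ : EuclideanSpace ℝ (Fin n), ξ ≠ 0 →
      fderiv ℝ A (t • ξ) v = (t:ℂ)⁻¹ * ((t:ℂ) ^ ((1:ℤ) - n) * fderiv ℝ A ξ v) := by
    intro t ht ξ hξ
    have htC : (t:ℂ) ≠ 0 := Complex.ofReal_ne_zero.2 ht.ne'
    have htξ : t • ξ ≠ 0 := smul_ne_zero ht.ne' hξ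
    have h1 : HasFDerivAt (fun x : EuclideanSpace ℝ (Fin n) => A (t • x))
        ((fderiv ℝ A (t • ξ)).comp (t • ContinuousLinearMap.id ℝ (EuclideanSpace ℝ (Fin n)))) ξ := by
      exact (hAdiff _ htξ).hasFDerivAt.comp ξ
        ((t • ContinuousLinearMap.id ℝ (EuclideanSpace ℝ (Fin n))).hasFDerivAt)
    have h2 : HasFDerivAt (fun x : EuclideanSpace ℝ (Fin n) => (t:ℂ) ^ ((1:ℤ) - n) * A x)
        ((t:ℂ) ^ ((1:ℤ) - n) • fderiv ℝ A ξ) ξ :=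
      (hAdiff ξ hξ).hasFDerivAt.const_mul _
    have heq : (fun x : EuclideanSpace ℝ (Fin n) => A (t • x)) =ᶠ[nhds ξ]
        (fun x => (t:ℂ) ^ ((1:ℤ) - n) * A x) :=
      Filter.eventuallyEq_of_mem (isOpen_ne.mem_nhds hξ) (fun x hx => hA_homog t ht x hx)
    have h3 : (fderiv ℝ A (t • ξ)).comp (t • ContinuousLinearMap.id ℝ (EuclideanSpace ℝ (Fin n)))
        = (t:ℂ) ^ ((1:ℤ) - n) • fderiv ℝ A ξ := (h1.congr_of_eventuallyEq heq.symm).unique h2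
    have h4 := congrArg (fun L : EuclideanSpace ℝ (Fin n) →L[ℝ] ℂ => L v) h3
    simp only [ContinuousLinearMap.comp_apply, ContinuousLinearMap.smul_apply,
      ContinuousLinearMap.id_apply, ContinuousLinearMap.smul_apply,
      ContinuousLinearMap.coe_smul', Pi.smul_apply, smul_eq_mul] at h4
    rw [(fderiv ℝ A (t • ξ)).map_smul, Complex.real_smul] at h4
    rw [← h4, inv_mul_cancel_left₀ htC]

  -- the three function pieces
  set T1f : EuclideanSpace ℝ (Fin n) → ℂ :=
    fun x => ψ (‖x‖^2) • fderiv ℝ A x v with hT1f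
  set T2f : EuclideanSpace ℝ (Fin n) → ℂ :=
    fun x => (deriv ψ (‖x‖^2) * (2 * (inner ℝ x v : ℝ))) • A x with hT2f
  set g : EuclideanSpace ℝ (Fin n) → ℂ := fun x => ψ (‖x‖^2) • A x with hg
  have hnormsq : Continuous (fun x : EuclideanSpace ℝ (Fin n) => ‖x‖^2) := continuous_norm.pow 2
  have hball : IsOpen {y : EuclideanSpace ℝ (Fin n) | ‖y‖ < 1} :=
    isOpen_lt continuous_norm continuous_const
  have hderC : Continuous (deriv ψ) := (myBump.contDiff (n := 1)).continuous_deriv (mod_cast le_rfl)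
  have hinnerC : Continuous (fun x : EuclideanSpace ℝ (Fin n) => (inner ℝ x v : ℝ)) :=
    continuous_id.inner continuous_const
  -- continuity
  have hT1c : Continuous T1f := by
    rw [continuous_iff_continuousAt]; intro x
    rcases lt_or_ge ‖x‖ 1 with hx | hx
    · apply Filter.EventuallyEq.continuousAt (y := (0:ℂ))
      filter_upwards [hball.mem_nhds hx] with y hy
      have h0 : ψ (‖y‖^2) = 0 := myBump_zero (Or.inl (by nlinarith [norm_nonneg y]))
      show ψ (‖y‖^2) • fderiv ℝ A y v = 0
      rw [h0, zero_smul]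
    · have hx0 : x ≠ 0 := by rintro rfl; rw [norm_zero] at hx; linarith
      exact ((myBump.continuous.comp hnormsq).continuousAt).smul (hfdC x hx0)
  have hT2c : Continuous T2f := by
    rw [continuous_iff_continuousAt]; intro x
    rcases lt_or_ge ‖x‖ 1 with hx | hx
    · apply Filter.EventuallyEq.continuousAt (y := (0:ℂ))
      filter_upwards [hball.mem_nhds hx] with y hy
      have h0 : deriv ψ (‖y‖^2) = 0 := myBump_deriv_zero (Or.inl (by nlinarith [norm_nonneg y]))
      show (deriv ψ (‖y‖^2) * (2 * (inner ℝ y v : ℝ))) • A y = 0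
      rw [h0, zero_mul, zero_smul]
    · have hx0 : x ≠ 0 := by rintro rfl; rw [norm_zero] at hx; linarith
      exact (((hderC.comp hnormsq).continuousAt).mul
        ((continuousAt_const).mul hinnerC.continuousAt)).smul (hAcont x hx0)
  have hgc : Continuous g := by
    rw [continuous_iff_continuousAt]; intro x
    rcases lt_or_ge ‖x‖ 1 with hx | hx
    · apply Filter.EventuallyEq.continuousAt (y := (0:ℂ))
      filter_upwards [hball.mem_nhds hx] with y hy
      have h0 : ψ (‖y‖^2) = 0 := myBump_zero (Or.inl (by nlinarith [norm_nonneg y]))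
      show ψ (‖y‖^2) • A y = 0
      rw [h0, zero_smul]
    · have hx0 : x ≠ 0 := by rintro rfl; rw [norm_zero] at hx; linarith
      exact ((myBump.continuous.comp hnormsq).continuousAt).smul (hAcont x hx0)
  -- compact support
  have hcomp : ∀ h : EuclideanSpace ℝ (Fin n) → ℂ,
      (∀ x : EuclideanSpace ℝ (Fin n), 3 < ‖x‖ → h x = 0) → HasCompactSupport h := by
    intro h hh
    apply HasCompactSupport.intro (isCompact_closedBall (0 : EuclideanSpace ℝ (Fin n)) 3)
    intro x hx
    refine hh x ?_
    simp only [mem_closedBall, dist_zero_right, not_le] at hx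
    exact hx
  have hT1s : HasCompactSupport T1f := by
    refine hcomp _ fun x hx => ?_
    have h0 : ψ (‖x‖^2) = 0 := myBump_zero (Or.inr (by nlinarith))
    show ψ (‖x‖^2) • fderiv ℝ A x v = 0
    rw [h0, zero_smul]
  have hT2s : HasCompactSupport T2f := by
    refine hcomp _ fun x hx => ?_
    have h0 : deriv ψ (‖x‖^2) = 0 := myBump_deriv_zero (Or.inr (by nlinarith))
    show (deriv ψ (‖x‖^2) * (2 * (inner ℝ x v : ℝ))) • A x = 0
    rw [h0, zero_mul, zero_smul]
  have hgs : HasCompactSupport g := by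
    refine hcomp _ fun x hx => ?_
    have h0 : ψ (‖x‖^2) = 0 := myBump_zero (Or.inr (by nlinarith))
    show ψ (‖x‖^2) • A x = 0
    rw [h0, zero_smul]
  have hT1i : Integrable T1f (volume : Measure (EuclideanSpace ℝ (Fin n))) :=
    hT1c.integrable_of_hasCompactSupport hT1s
  have hT2i : Integrable T2f (volume : Measure (EuclideanSpace ℝ (Fin n))) :=
    hT2c.integrable_of_hasCompactSupport hT2s
  have hgi : Integrable g (volume : Measure (EuclideanSpace ℝ (Fin n))) :=
    hgc.integrable_of_hasCompactSupport hgs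
  -- line derivative of g
  have hgline : ∀ x : EuclideanSpace ℝ (Fin n), HasLineDerivAt ℝ g (T1f x + T2f x) x v := by
    intro x
    rcases lt_or_ge ‖x‖ 1 with hx | hx
    · have hz1 : T1f x = 0 := by
        have h0 : ψ (‖x‖^2) = 0 := myBump_zero (Or.inl (by nlinarith [norm_nonneg x]))
        show ψ (‖x‖^2) • fderiv ℝ A x v = 0
        rw [h0, zero_smul]
      have hz2 : T2f x = 0 := by
        have h0 : deriv ψ (‖x‖^2) = 0 := myBump_deriv_zero (Or.inl (by nlinarith [norm_nonneg x]))
        show (deriv ψ (‖x‖^2) * (2 * (inner ℝ x v : ℝ))) • A x = 0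
        rw [h0, zero_mul, zero_smul]
      rw [hz1, hz2, add_zero]
      show HasDerivAt (fun t : ℝ => g (x + t • v)) 0 0
      have hev : (fun t : ℝ => g (x + t • v)) =ᶠ[nhds (0:ℝ)] (fun _ => (0:ℂ)) := by
        have hco : Continuous (fun t : ℝ => ‖x + t • v‖) :=
          (continuous_const.add (continuous_id.smul continuous_const)).norm
        have hmem : {t : ℝ | ‖x + t • v‖ < 1} ∈ nhds (0:ℝ) := by
          have : IsOpen {t : ℝ | ‖x + t • v‖ < 1} := isOpen_lt hco continuous_const
          refine this.mem_nhds ?_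
          simpa using hx
        filter_upwards [hmem] with t ht
        have h0 : ψ (‖x + t • v‖^2) = 0 := myBump_zero (Or.inl (by nlinarith [norm_nonneg (x + t • v)]))
        show ψ (‖x + t • v‖^2) • A (x + t • v) = 0
        rw [h0, zero_smul]
      exact (hasDerivAt_const (0:ℝ) (0:ℂ)).congr_of_eventuallyEq hev
    · have hx0 : x ≠ 0 := by rintro rfl; rw [norm_zero] at hx; linarith
      show HasDerivAt (fun t : ℝ => g (x + t • v)) (T1f x + T2f x) 0
      have hx00 : x + (0:ℝ) • v = x := by rw [zero_smul, add_zero]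
      have hL : HasDerivAt (fun t : ℝ => x + t • v) v 0 := by
        simpa using ((hasDerivAt_id (0:ℝ)).smul_const v).const_add x
      have h1 : HasDerivAt (fun t : ℝ => ‖x + t • v‖^2) (2 * (inner ℝ x v : ℝ)) 0 := by
        have := hL.norm_sq
        rwa [hx00] at this
      have h2 : HasDerivAt ψ (deriv ψ (‖x‖^2)) ((fun t : ℝ => ‖x + t • v‖^2) 0) := by
        show HasDerivAt ψ (deriv ψ (‖x‖^2)) (‖x + (0:ℝ) • v‖^2)
        rw [hx00]
        exact (((myBump.contDiff (n := 1)).differentiable (by norm_num)) (‖x‖^2)).hasDerivAt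
      have h3 : HasDerivAt (fun t : ℝ => ψ (‖x + t • v‖^2))
          (deriv ψ (‖x‖^2) * (2 * (inner ℝ x v : ℝ))) 0 := HasDerivAt.comp (h₂ := ψ) (h := fun t : ℝ => ‖x + t • v‖^2) 0 h2 h1
      have hA' : HasFDerivAt A (fderiv ℝ A x) ((fun t : ℝ => x + t • v) 0) := by
        show HasFDerivAt A (fderiv ℝ A x) (x + (0:ℝ) • v)
        rw [hx00]
        exact (hAdiff x hx0).hasFDerivAt
      have h4 : HasDerivAt (fun t : ℝ => A (x + t • v)) (fderiv ℝ A x v) 0 :=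
        hA'.comp_hasDerivAt 0 hL
      have h5 := h3.smul h4
      simp only [hx00] at h5
      convert h5 using 1 <;> rfl
  -- integration by parts: the integral of the directional derivative vanishes
  have hIBP : ∫ x, (T1f x + T2f x) ∂(volume : Measure (EuclideanSpace ℝ (Fin n))) = 0 := by
    have h0 : ∀ x : EuclideanSpace ℝ (Fin n),
        HasLineDerivAt ℝ (fun _ : EuclideanSpace ℝ (Fin n) => (1:ℂ)) (0:ℂ) x v := fun x =>
      hasDerivAt_const (0:ℝ) (1:ℂ)
    have hint1 : Integrable (fun x => (ContinuousLinearMap.mul ℝ ℂ) ((T1f x + T2f x)) (1:ℂ))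
        (volume : Measure (EuclideanSpace ℝ (Fin n))) := by
      simp only [ContinuousLinearMap.mul_apply', mul_one]; exact hT1i.add hT2i
    have hint2 : Integrable (fun x => (ContinuousLinearMap.mul ℝ ℂ) (g x) (0:ℂ))
        (volume : Measure (EuclideanSpace ℝ (Fin n))) := by
      simpa using (integrable_zero _ ℂ (volume : Measure (EuclideanSpace ℝ (Fin n))))
    have hint3 : Integrable (fun x => (ContinuousLinearMap.mul ℝ ℂ) (g x) (1:ℂ))
        (volume : Measure (EuclideanSpace ℝ (Fin n))) := by
      simpa using hgi
    have h := integral_bilinear_hasLineDerivAt_right_eq_neg_left_of_integrable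
      (μ := (volume : Measure (EuclideanSpace ℝ (Fin n))))
      (B := ContinuousLinearMap.mul ℝ ℂ) (f := g) (f' := fun x => T1f x + T2f x)
      (g := fun _ => (1:ℂ)) (g' := fun _ => (0:ℂ)) hint1 hint2 hint3 (fun x _ => hgline x) (fun x _ => h0 x)
    simp only [ContinuousLinearMap.mul_apply', mul_zero, mul_one, integral_zero] at h
    exact neg_eq_zero.mp h.symm

  -- polar coordinates for the first term
  have hT1 : ∫ x, T1f x ∂(volume : Measure (EuclideanSpace ℝ (Fin n))) =
      (∫ ω : Metric.sphere (0 : EuclideanSpace ℝ (Fin n)) 1,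
        fderiv ℝ A (ω : EuclideanSpace ℝ (Fin n)) v
        ∂((volume : Measure (EuclideanSpace ℝ (Fin n))).toSphere))
      * ∫ r in Set.Ioi (0:ℝ), (r ^ (n-1)) •
          ((ψ (r^2) : ℂ) * ((r:ℂ)⁻¹ * (r:ℂ) ^ ((1:ℤ) - n))) := by
    refine polar_integral (by omega) T1f
      (fun r => (ψ (r^2) : ℂ) * ((r:ℂ)⁻¹ * (r:ℂ) ^ ((1:ℤ) - n)))
      (fun ω => fderiv ℝ A (ω : EuclideanSpace ℝ (Fin n)) v) ?_
    intro r hr ω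
    have hω : ‖(ω : EuclideanSpace ℝ (Fin n))‖ = 1 := norm_eq_of_mem_sphere ω
    have hωne : (ω : EuclideanSpace ℝ (Fin n)) ≠ 0 := ne_of_mem_sphere ω.2 one_ne_zero
    have hnorm : ‖r • (ω : EuclideanSpace ℝ (Fin n))‖ = r := by
      rw [norm_smul, hω, Real.norm_eq_abs, abs_of_pos hr, mul_one]
    show ψ (‖r • (ω : EuclideanSpace ℝ (Fin n))‖^2) •
        fderiv ℝ A (r • (ω : EuclideanSpace ℝ (Fin n))) v = _
    rw [hnorm, hfd_homog r hr _ hωne, Complex.real_smul]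
    ring
  -- polar coordinates for the second term
  have hT2 : ∫ x, T2f x ∂(volume : Measure (EuclideanSpace ℝ (Fin n))) =
      (∫ ω : Metric.sphere (0 : EuclideanSpace ℝ (Fin n)) 1,
        (((inner ℝ (ω : EuclideanSpace ℝ (Fin n)) v : ℝ) : ℂ) * A (ω : EuclideanSpace ℝ (Fin n)))
        ∂((volume : Measure (EuclideanSpace ℝ (Fin n))).toSphere))
      * ∫ r in Set.Ioi (0:ℝ), (r ^ (n-1)) •
          (((deriv ψ (r^2) * (2*r) : ℝ) : ℂ) * (r:ℂ) ^ ((1:ℤ) - n)) := by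
    refine polar_integral (by omega) T2f
      (fun r => ((deriv ψ (r^2) * (2*r) : ℝ) : ℂ) * (r:ℂ) ^ ((1:ℤ) - n))
      (fun ω => ((inner ℝ (ω : EuclideanSpace ℝ (Fin n)) v : ℝ) : ℂ)
        * A (ω : EuclideanSpace ℝ (Fin n))) ?_
    intro r hr ω
    have hω : ‖(ω : EuclideanSpace ℝ (Fin n))‖ = 1 := norm_eq_of_mem_sphere ω
    have hωne : (ω : EuclideanSpace ℝ (Fin n)) ≠ 0 := ne_of_mem_sphere ω.2 one_ne_zero
    have hnorm : ‖r • (ω : EuclideanSpace ℝ (Fin n))‖ = r := by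
      rw [norm_smul, hω, Real.norm_eq_abs, abs_of_pos hr, mul_one]
    show (deriv ψ (‖r • (ω : EuclideanSpace ℝ (Fin n))‖^2)
        * (2 * (inner ℝ (r • (ω : EuclideanSpace ℝ (Fin n))) v : ℝ)))
        • A (r • (ω : EuclideanSpace ℝ (Fin n))) = _
    rw [hnorm, real_inner_smul_left, hA_homog r hr _ hωne, Complex.real_smul]
    push_cast
    ring
  -- the radial integral for the first term
  have hzpow : ∀ r : ℝ, 0 < r → ((r:ℂ) ^ (n-1)) * (r:ℂ) ^ ((1:ℤ) - n) = 1 := by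
    intro r hr
    have hrC : (r:ℂ) ≠ 0 := Complex.ofReal_ne_zero.2 hr.ne'
    rw [← zpow_natCast (r:ℂ) (n-1), ← zpow_add₀ hrC]
    have h0 : ((n-1:ℕ):ℤ) + ((1:ℤ) - (n:ℤ)) = 0 := by omega
    rw [h0, zpow_zero]
  have hrad1 : ∫ r in Set.Ioi (0:ℝ), (r ^ (n-1)) •
      ((ψ (r^2) : ℂ) * ((r:ℂ)⁻¹ * (r:ℂ) ^ ((1:ℤ) - n)))
      = ((∫ r in Set.Ioi (0:ℝ), ψ (r^2) * r⁻¹ : ℝ) : ℂ) := by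
    have step : ∫ r in Set.Ioi (0:ℝ), (r ^ (n-1)) •
        ((ψ (r^2) : ℂ) * ((r:ℂ)⁻¹ * (r:ℂ) ^ ((1:ℤ) - n)))
        = ∫ r in Set.Ioi (0:ℝ), ((ψ (r^2) * r⁻¹ : ℝ) : ℂ) := by
      refine setIntegral_congr_fun measurableSet_Ioi fun r hr => ?_
      have hr0 : (0:ℝ) < r := hr
      rw [Complex.real_smul]
      push_cast
      linear_combination ((ψ (r^2) : ℝ) : ℂ) * (r:ℂ)⁻¹ * hzpow r hr0
    rw [step]
    exact integral_ofReal
  have hrad2 : ∫ r in Set.Ioi (0:ℝ), (r ^ (n-1)) •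
      (((deriv ψ (r^2) * (2*r) : ℝ) : ℂ) * (r:ℂ) ^ ((1:ℤ) - n))
      = ((∫ r in Set.Ioi (0:ℝ), deriv ψ (r^2) * (2*r) : ℝ) : ℂ) := by
    have step : ∫ r in Set.Ioi (0:ℝ), (r ^ (n-1)) •
        (((deriv ψ (r^2) * (2*r) : ℝ) : ℂ) * (r:ℂ) ^ ((1:ℤ) - n))
        = ∫ r in Set.Ioi (0:ℝ), ((deriv ψ (r^2) * (2*r) : ℝ) : ℂ) := by
      refine setIntegral_congr_fun measurableSet_Ioi fun r hr => ?_
      have hr0 : (0:ℝ) < r := hr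
      rw [Complex.real_smul]
      push_cast
      linear_combination (((deriv ψ (r^2) : ℝ) : ℂ) * 2 * (r:ℂ)) * hzpow r hr0
    rw [step]
    exact integral_ofReal
  -- FTC: the second radial integral vanishes
  have hφ : ContDiff ℝ 1 (fun r : ℝ => ψ (r^2)) :=
    (myBump.contDiff (n := 1)).comp (contDiff_id.pow 2)
  have hφs : HasCompactSupport (fun r : ℝ => ψ (r^2)) := by
    apply HasCompactSupport.intro (isCompact_closedBall (0:ℝ) 3)
    intro r hr
    simp only [mem_closedBall, dist_zero_right, Real.norm_eq_abs, not_le] at hr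
    exact myBump_zero (Or.inr (by nlinarith [sq_abs r, abs_nonneg r]))
  have hderiv_eq : ∀ r : ℝ, deriv (fun r : ℝ => ψ (r^2)) r = deriv ψ (r^2) * (2*r) := by
    intro r
    have h1 : HasDerivAt (fun r : ℝ => r^2) (2*r) r := by
      simpa using hasDerivAt_pow 2 r
    have h2 : HasDerivAt ψ (deriv ψ (r^2)) ((fun y : ℝ => y^2) r) :=
      (((myBump.contDiff (n := 1)).differentiable (by norm_num)) (r^2)).hasDerivAt
    have h3 : HasDerivAt (ψ ∘ fun y : ℝ => y^2) (deriv ψ (r^2) * (2*r)) r :=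
      HasDerivAt.comp (h₂ := ψ) (h := fun y : ℝ => y ^ 2) r h2 h1
    exact h3.deriv
  have hFTC : ∫ r in Set.Ioi (0:ℝ), deriv ψ (r^2) * (2*r) = 0 := by
    rw [← setIntegral_congr_fun measurableSet_Ioi (fun r _ => hderiv_eq r)]
    rw [HasCompactSupport.integral_Ioi_deriv_eq hφ hφs 0]
    have : ψ ((0:ℝ)^2) = 0 := myBump_zero (Or.inl (by norm_num))
    rw [this, neg_zero]
  -- positivity of the first radial integral
  have hbc : Continuous (fun r : ℝ => ψ (r^2) * r⁻¹) := by
    rw [continuous_iff_continuousAt]; intro r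
    by_cases hr : r = 0
    · apply Filter.EventuallyEq.continuousAt (y := (0:ℝ))
      have hmem : {y : ℝ | |y| < 1} ∈ nhds r := by
        have : IsOpen {y : ℝ | |y| < 1} := isOpen_lt (continuous_abs) continuous_const
        exact this.mem_nhds (by simp [hr])
      filter_upwards [hmem] with y hy
      have h0 : ψ (y^2) = 0 := myBump_zero (Or.inl (by nlinarith [sq_abs y, abs_nonneg y]))
      rw [h0, zero_mul]
    · exact ((myBump.continuous.comp (continuous_pow 2)).continuousAt).mul
        (continuousAt_inv₀ hr)
  have hbs : HasCompactSupport (fun r : ℝ => ψ (r^2) * r⁻¹) := by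
    apply HasCompactSupport.intro (isCompact_closedBall (0:ℝ) 3)
    intro r hr
    simp only [mem_closedBall, dist_zero_right, Real.norm_eq_abs, not_le] at hr
    have h0 : ψ (r^2) = 0 := myBump_zero (Or.inr (by nlinarith [sq_abs r, abs_nonneg r]))
    rw [h0, zero_mul]
  have hpos : 0 < ∫ r in Set.Ioi (0:ℝ), ψ (r^2) * r⁻¹ := by
    rw [setIntegral_pos_iff_support_of_nonneg_ae
      ((ae_restrict_mem measurableSet_Ioi).mono fun r hr =>
        mul_nonneg myBump.nonneg (inv_nonneg.mpr (le_of_lt hr)))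
      ((hbc.integrable_of_hasCompactSupport hbs).integrableOn)]
    refine lt_of_lt_of_le ?_ (measure_mono (?_ : Ioo (3/2:ℝ) 2 ⊆ _))
    · rw [Real.volume_Ioo]
      norm_num
    · rintro r ⟨h1, h2⟩
      constructor
      · have h3 : ψ (r^2) = 1 := myBump_one (by nlinarith) (by nlinarith)
        show ψ (r^2) * r⁻¹ ≠ 0
        rw [h3, one_mul]
        exact inv_ne_zero (by linarith)
      · show r ∈ Set.Ioi (0:ℝ)
        show (0:ℝ) < r
        linarith
  -- put everything together
  rw [integral_add hT1i hT2i, hT1, hT2, hrad1, hrad2, hFTC] at hIBP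
  rw [Complex.ofReal_zero, mul_zero, add_zero] at hIBP
  rcases mul_eq_zero.mp hIBP with h | h
  · exact h
  · exact absurd h (Complex.ofReal_ne_zero.2 hpos.ne')
end

section
/- Let n ≥ 2, let a, b ∈ ℤ, and let γ be a multi-index (an n-tuple of nonnegative integers). Let σ, τ : ℝⁿ × (ℝⁿ \ {0}) → ℂ be smooth functions, 2π-periodic in each component of the first variable x, positively homogeneous in ξ of degrees a and b respectively. Then there exist smooth functions A_1, …, A_n and B_1, …, B_n on ℝⁿ × (ℝⁿ \ {0}), all 2π-periodic in x, with each A_ℓ positively homogeneous in ξ of degree a+b−|γ|+1 and each B_ℓ positively homogeneous in ξ of degree a+b−|γ|, such that (∂_ξ^γ σ)(D_x^γ τ) − (D_x^γ σ)(∂_ξ^γ τ) = Σ_{ℓ=1}^{n} ( ∂_{ξ_ℓ} A_ℓ + D_{x_ℓ} B_ℓ ) on ℝⁿ × (ℝⁿ \ {0}). -/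
open Real

/-- The partial derivative `∂_ℓ f` of `f : ℝⁿ → ℂ`. -/
noncomputable def partialDeriv (n : ℕ) (ℓ : Fin n) (f : (Fin n → ℝ) → ℂ) :
    (Fin n → ℝ) → ℂ :=
  fun v => fderiv ℝ f v (Pi.single ℓ 1)

/-- The iterated partial derivative `∂^γ f` for a multi-index `γ`. -/
noncomputable def partialDerivIter (n : ℕ) (γ : Fin n → ℕ) (f : (Fin n → ℝ) → ℂ) :
    (Fin n → ℝ) → ℂ :=
  (List.finRange n).foldr (fun ℓ g => (partialDeriv n ℓ)^[γ ℓ] g) f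

/-- `∂_ξ^γ σ` for `σ = σ(x, ξ)`. -/
noncomputable def partialXi (n : ℕ) (γ : Fin n → ℕ)
    (σ : (Fin n → ℝ) → (Fin n → ℝ) → ℂ) : (Fin n → ℝ) → (Fin n → ℝ) → ℂ :=
  fun x => partialDerivIter n γ (σ x)

/-- `∂_x^γ σ` for `σ = σ(x, ξ)`. -/
noncomputable def partialX (n : ℕ) (γ : Fin n → ℕ)
    (σ : (Fin n → ℝ) → (Fin n → ℝ) → ℂ) : (Fin n → ℝ) → (Fin n → ℝ) → ℂ :=
  fun x ξ => partialDerivIter n γ (fun x' => σ x' ξ) x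

/-- `D_x^γ σ = (−i)^{|γ|} ∂_x^γ σ`. -/
noncomputable def DxIter (n : ℕ) (γ : Fin n → ℕ)
    (σ : (Fin n → ℝ) → (Fin n → ℝ) → ℂ) : (Fin n → ℝ) → (Fin n → ℝ) → ℂ :=
  fun x ξ => (-Complex.I) ^ (∑ ℓ, γ ℓ) * partialX n γ σ x ξ

namespace Bracket

variable {n : ℕ}

noncomputable def It (L : List (Fin n)) (γ : Fin n → ℕ) (f : (Fin n → ℝ) → ℂ) :
    (Fin n → ℝ) → ℂ :=
  L.foldr (fun ℓ g => (partialDeriv n ℓ)^[γ ℓ] g) f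

lemma It_nil (γ : Fin n → ℕ) (f) : It ([] : List (Fin n)) γ f = f := rfl

lemma It_cons (a : Fin n) (L : List (Fin n)) (γ : Fin n → ℕ) (f) :
    It (a :: L) γ f = (partialDeriv n a)^[γ a] (It L γ f) := rfl

lemma pdIter_eq_It (γ : Fin n → ℕ) (f) : partialDerivIter n γ f = It (List.finRange n) γ f := rfl

lemma It_congr {L : List (Fin n)} {γ γ' : Fin n → ℕ} (h : ∀ i ∈ L, γ i = γ' i) (f) :
    It L γ f = It L γ' f := by
  induction L with
  | nil => rfl
  | cons a L ih =>
      rw [It_cons, It_cons, h a (by simp), ih (fun i hi => h i (by simp [hi]))]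

lemma It_zero {L : List (Fin n)} {γ : Fin n → ℕ} (h : ∀ i ∈ L, γ i = 0) (f) :
    It L γ f = f := by
  induction L with
  | nil => rfl
  | cons a L ih =>
      rw [It_cons, h a (by simp), Function.iterate_zero, id_eq,
        ih (fun i hi => h i (by simp [hi]))]

/-- inner peel at index `j`, assuming all later elements of `L` have `γ = 0`. -/
lemma It_peel_inner {L : List (Fin n)} (hL : L.Pairwise (· < ·)) {γ : Fin n → ℕ} {j : Fin n}
    (hjL : j ∈ L) (hj : γ j ≠ 0) (hmax : ∀ i, j < i → γ i = 0) (f) :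
    It L γ f = It L (Function.update γ j (γ j - 1)) (partialDeriv n j f) := by
  induction L with
  | nil => simp at hjL
  | cons a L ih =>
      rcases List.pairwise_cons.1 hL with ⟨ha, hL'⟩
      rw [It_cons, It_cons]
      by_cases haj : a = j
      · subst haj
        have h0 : ∀ i ∈ L, γ i = 0 := fun i hi => hmax i (ha i hi)
        have h0' : ∀ i ∈ L, Function.update γ a (γ a - 1) i = 0 := by
          intro i hi
          rw [Function.update_of_ne (by rintro rfl; exact lt_irrefl _ (ha i hi))]
          exact h0 i hi
        rw [It_zero h0, It_zero h0', Function.update_self]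
        obtain ⟨k, hk⟩ : ∃ k, γ a = k + 1 := ⟨γ a - 1, (Nat.succ_pred_eq_of_pos (Nat.pos_of_ne_zero hj)).symm⟩
        rw [hk]
        simp [Function.iterate_succ_apply]
      · have hjL' : j ∈ L := by
          cases hjL with
          | head => exact absurd rfl haj
          | tail _ h => exact h
        rw [ih hL' hjL', Function.update_of_ne haj]

/-- outer peel at index `m`, assuming all earlier elements of `L` have `γ = 0`. -/
lemma It_peel_outer {L : List (Fin n)} (hL : L.Pairwise (· < ·)) {γ : Fin n → ℕ} {m : Fin n}
    (hmL : m ∈ L) (hm : γ m ≠ 0) (hmin : ∀ i, i < m → γ i = 0) (f) :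
    It L γ f = partialDeriv n m (It L (Function.update γ m (γ m - 1)) f) := by
  induction L with
  | nil => simp at hmL
  | cons a L ih =>
      rcases List.pairwise_cons.1 hL with ⟨ha, hL'⟩
      rw [It_cons, It_cons]
      by_cases ham : a = m
      · subst ham
        have hIt : It L γ f = It L (Function.update γ a (γ a - 1)) f :=
          It_congr (fun i hi => (Function.update_of_ne (by rintro rfl; exact lt_irrefl _ (ha i hi)) _ _).symm) f
        rw [hIt, Function.update_self]
        obtain ⟨k, hk⟩ : ∃ k, γ a = k + 1 := ⟨γ a - 1, (Nat.succ_pred_eq_of_pos (Nat.pos_of_ne_zero hm)).symm⟩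
        rw [hk]
        simp [Function.iterate_succ_apply']
      · have hmL' : m ∈ L := by
          cases hmL with
          | head => exact absurd rfl ham
          | tail _ h => exact h
        have ha0 : γ a = 0 := hmin a (ha m hmL')
        have ha0' : Function.update γ m (γ m - 1) a = 0 := by
          rw [Function.update_of_ne ham]; exact ha0
        simp only [ha0, ha0', Function.iterate_zero, id_eq]
        exact ih hL' hmL'

/-- inner peel for `partialDerivIter`. -/
lemma pdIter_peel_inner {γ : Fin n → ℕ} {j : Fin n} (hj : γ j ≠ 0)
    (hmax : ∀ i, j < i → γ i = 0) (f) :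
    partialDerivIter n γ f
      = partialDerivIter n (Function.update γ j (γ j - 1)) (partialDeriv n j f) :=
  It_peel_inner (List.pairwise_lt_finRange n) (List.mem_finRange j) hj hmax f

/-- outer peel for `partialDerivIter`. -/
lemma pdIter_peel_outer {γ : Fin n → ℕ} {m : Fin n} (hm : γ m ≠ 0)
    (hmin : ∀ i, i < m → γ i = 0) (f) :
    partialDerivIter n γ f
      = partialDeriv n m (partialDerivIter n (Function.update γ m (γ m - 1)) f) :=
  It_peel_outer (List.pairwise_lt_finRange n) (List.mem_finRange m) hm hmin f

lemma pdIter_zero {γ : Fin n → ℕ} (h : ∀ i, γ i = 0) (f) : partialDerivIter n γ f = f :=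
  It_zero (fun i _ => h i) f

section Analytic

def Unc (f : (Fin n → ℝ) → (Fin n → ℝ) → ℂ) : (Fin n → ℝ) × (Fin n → ℝ) → ℂ :=
  fun p => f p.1 p.2

def UU (n : ℕ) : Set ((Fin n → ℝ) × (Fin n → ℝ)) := {p | p.2 ≠ 0}

lemma isOpen_UU : IsOpen (UU n) := by
  have : UU n = Prod.snd ⁻¹' ({0}ᶜ : Set (Fin n → ℝ)) := rfl
  rw [this]
  exact isOpen_compl_singleton.preimage continuous_snd

def Smo (f : (Fin n → ℝ) → (Fin n → ℝ) → ℂ) : Prop :=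
  ContDiffOn ℝ (⊤ : ℕ∞) (Unc f) (UU n)

def Perf (f : (Fin n → ℝ) → (Fin n → ℝ) → ℂ) : Prop :=
  ∀ (x ξ : Fin n → ℝ) (k : Fin n), f (x + Pi.single k (2 * π)) ξ = f x ξ

def Hom (d : ℤ) (f : (Fin n → ℝ) → (Fin n → ℝ) → ℂ) : Prop :=
  ∀ (x : Fin n → ℝ) (t : ℝ), 0 < t → ∀ ξ : Fin n → ℝ, ξ ≠ 0 →
    f x (t • ξ) = (t : ℂ) ^ d * f x ξ

noncomputable def pXi (j : Fin n) (f : (Fin n → ℝ) → (Fin n → ℝ) → ℂ) :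
    (Fin n → ℝ) → (Fin n → ℝ) → ℂ :=
  fun x => partialDeriv n j (f x)

noncomputable def pX (j : Fin n) (f : (Fin n → ℝ) → (Fin n → ℝ) → ℂ) :
    (Fin n → ℝ) → (Fin n → ℝ) → ℂ :=
  fun x ξ => partialDeriv n j (fun x' => f x' ξ) x

variable {f g : (Fin n → ℝ) → (Fin n → ℝ) → ℂ} {x ξ : Fin n → ℝ} {j : Fin n}

lemma mem_UU (hξ : ξ ≠ 0) : ((x, ξ) : (Fin n → ℝ) × (Fin n → ℝ)) ∈ UU n := hξ

lemma contDiffAt_unc (hf : Smo f) (hξ : ξ ≠ 0) :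
    ContDiffAt ℝ (⊤ : ℕ∞) (Unc f) (x, ξ) :=
  hf.contDiffAt (isOpen_UU.mem_nhds (mem_UU hξ))

lemma diffAt_unc (hf : Smo f) (hξ : ξ ≠ 0) :
    DifferentiableAt ℝ (Unc f) (x, ξ) :=
  (contDiffAt_unc hf hξ).differentiableAt (by simp)

lemma hasFDerivAt_pair2 (x ξ : Fin n → ℝ) :
    HasFDerivAt (fun ξ' : Fin n → ℝ => ((x, ξ') : (Fin n → ℝ) × (Fin n → ℝ)))
      ((0 : (Fin n → ℝ) →L[ℝ] (Fin n → ℝ)).prod (ContinuousLinearMap.id ℝ (Fin n → ℝ))) ξ :=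
  (hasFDerivAt_const x ξ).prodMk (hasFDerivAt_id ξ)

lemma hasFDerivAt_pair1 (x ξ : Fin n → ℝ) :
    HasFDerivAt (fun x' : Fin n → ℝ => ((x', ξ) : (Fin n → ℝ) × (Fin n → ℝ)))
      ((ContinuousLinearMap.id ℝ (Fin n → ℝ)).prod (0 : (Fin n → ℝ) →L[ℝ] (Fin n → ℝ))) x :=
  (hasFDerivAt_id x).prodMk (hasFDerivAt_const ξ x)

/-- slice differentiability / representation, general version against a total function `Φ`. -/
lemma slice2_fderiv {Φ : (Fin n → ℝ) × (Fin n → ℝ) → ℂ}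
    (hΦ : DifferentiableAt ℝ Φ (x, ξ)) (hξ : ξ ≠ 0)
    (hagree : ∀ (x' ξ' : Fin n → ℝ), ξ' ≠ 0 → g x' ξ' = Φ (x', ξ')) (v : Fin n → ℝ) :
    fderiv ℝ (g x) ξ v = fderiv ℝ Φ (x, ξ) (0, v) := by
  have hev : g x =ᶠ[nhds ξ] fun ξ' => Φ (x, ξ') := by
    filter_upwards [isOpen_compl_singleton.mem_nhds hξ] with ξ' hξ'
    exact hagree x ξ' hξ'
  have hcomp : HasFDerivAt (fun ξ' => Φ (x, ξ'))
      ((fderiv ℝ Φ (x, ξ)).comp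
        ((0 : (Fin n → ℝ) →L[ℝ] (Fin n → ℝ)).prod (ContinuousLinearMap.id ℝ (Fin n → ℝ)))) ξ :=
    hΦ.hasFDerivAt.comp ξ (hasFDerivAt_pair2 x ξ)
  rw [hev.fderiv_eq, hcomp.fderiv]
  simp

lemma slice1_fderiv {Φ : (Fin n → ℝ) × (Fin n → ℝ) → ℂ}
    (hΦ : DifferentiableAt ℝ Φ (x, ξ)) (hξ : ξ ≠ 0)
    (hagree : ∀ (x' ξ' : Fin n → ℝ), ξ' ≠ 0 → g x' ξ' = Φ (x', ξ')) (v : Fin n → ℝ) :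
    fderiv ℝ (fun x' => g x' ξ) x v = fderiv ℝ Φ (x, ξ) (v, 0) := by
  have hev : (fun x' => g x' ξ) = fun x' => Φ (x', ξ) := by
    funext x'; exact hagree x' ξ hξ
  have hcomp : HasFDerivAt (fun x' => Φ (x', ξ))
      ((fderiv ℝ Φ (x, ξ)).comp
        ((ContinuousLinearMap.id ℝ (Fin n → ℝ)).prod (0 : (Fin n → ℝ) →L[ℝ] (Fin n → ℝ)))) x :=
    hΦ.hasFDerivAt.comp x (hasFDerivAt_pair1 x ξ)
  rw [hev, hcomp.fderiv]
  simp

lemma repr_pXi (hf : Smo f) (hξ : ξ ≠ 0) :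
    pXi j f x ξ = fderiv ℝ (Unc f) (x, ξ) (0, Pi.single j 1) :=
  slice2_fderiv (diffAt_unc hf hξ) hξ (fun _ _ _ => rfl) _

lemma repr_pX (hf : Smo f) (hξ : ξ ≠ 0) :
    pX j f x ξ = fderiv ℝ (Unc f) (x, ξ) (Pi.single j 1, 0) :=
  slice1_fderiv (diffAt_unc hf hξ) hξ (fun _ _ _ => rfl) _

lemma diffAt_slice2 (hf : Smo f) (hξ : ξ ≠ 0) : DifferentiableAt ℝ (f x) ξ := by
  have : DifferentiableAt ℝ (fun ξ' => Unc f (x, ξ')) ξ :=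
    (diffAt_unc hf hξ).comp ξ (hasFDerivAt_pair2 x ξ).differentiableAt
  exact this

lemma diffAt_slice1 (hf : Smo f) (hξ : ξ ≠ 0) :
    DifferentiableAt ℝ (fun x' => f x' ξ) x := by
  have : DifferentiableAt ℝ (Unc f ∘ fun x' : Fin n → ℝ => ((x', ξ) : (Fin n → ℝ) × (Fin n → ℝ))) x :=
    (diffAt_unc hf hξ).comp x (hasFDerivAt_pair1 x ξ).differentiableAt
  exact this

lemma smo_fderiv (hf : Smo f) :
    ContDiffOn ℝ (⊤ : ℕ∞) (fderiv ℝ (Unc f)) (UU n) :=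
  hf.fderiv_of_isOpen isOpen_UU (by simp)

lemma smo_apply_fderiv (hf : Smo f) (w : (Fin n → ℝ) × (Fin n → ℝ)) :
    ContDiffOn ℝ (⊤ : ℕ∞) (fun p => fderiv ℝ (Unc f) p w) (UU n) :=
  (ContinuousLinearMap.apply ℝ ℂ w).contDiff.comp_contDiffOn (smo_fderiv hf)

lemma smo_pXi (hf : Smo f) : Smo (pXi j f) :=
  (smo_apply_fderiv hf (0, Pi.single j 1)).congr (fun p hp => by
    obtain ⟨x, ξ⟩ := p
    exact repr_pXi hf hp)

lemma smo_pX (hf : Smo f) : Smo (pX j f) :=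
  (smo_apply_fderiv hf (Pi.single j 1, 0)).congr (fun p hp => by
    obtain ⟨x, ξ⟩ := p
    exact repr_pX hf hp)

lemma diffAt_fderivG (hf : Smo f) (hξ : ξ ≠ 0) :
    DifferentiableAt ℝ (fderiv ℝ (Unc f)) (x, ξ) :=
  ((smo_fderiv hf).contDiffAt (isOpen_UU.mem_nhds (mem_UU hξ))).differentiableAt (by simp)

lemma diffAt_applyG (hf : Smo f) (hξ : ξ ≠ 0) (w : (Fin n → ℝ) × (Fin n → ℝ)) :
    DifferentiableAt ℝ (fun p => fderiv ℝ (Unc f) p w) (x, ξ) :=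
  ((ContinuousLinearMap.apply ℝ ℂ w).differentiable.differentiableAt).comp _
    (diffAt_fderivG hf hξ)

lemma fderiv_applyG (hf : Smo f) (hξ : ξ ≠ 0) (w u : (Fin n → ℝ) × (Fin n → ℝ)) :
    fderiv ℝ (fun p => fderiv ℝ (Unc f) p w) (x, ξ) u
      = fderiv ℝ (fderiv ℝ (Unc f)) (x, ξ) u w := by
  have h := ((ContinuousLinearMap.apply ℝ ℂ w).hasFDerivAt).comp (x, ξ)
    (diffAt_fderivG hf hξ).hasFDerivAt
  rw [show (fun p => fderiv ℝ (Unc f) p w)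
      = ⇑((ContinuousLinearMap.apply ℝ ℂ) w) ∘ fderiv ℝ (Unc f) from rfl, h.fderiv]
  rfl

lemma symm2 (hf : Smo f) (hξ : ξ ≠ 0) (u v : (Fin n → ℝ) × (Fin n → ℝ)) :
    fderiv ℝ (fderiv ℝ (Unc f)) (x, ξ) u v
      = fderiv ℝ (fderiv ℝ (Unc f)) (x, ξ) v u :=
  (contDiffAt_unc hf hξ).isSymmSndFDerivAt (by
    rw [show ((2 : WithTop ℕ∞)) = ((2 : ℕ∞) : WithTop ℕ∞) from rfl]
    rw [minSmoothness_of_isRCLikeNormedField]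
    exact WithTop.coe_le_coe.2 (le_top : (2 : ℕ∞) ≤ ⊤)) u v

/-- vectors for the four operators -/
def vecOf (s : Bool) (j : Fin n) : (Fin n → ℝ) × (Fin n → ℝ) :=
  if s then (Pi.single j 1, 0) else (0, Pi.single j 1)

noncomputable def opOf (s : Bool) (j : Fin n) :
    ((Fin n → ℝ) → (Fin n → ℝ) → ℂ) → (Fin n → ℝ) → (Fin n → ℝ) → ℂ :=
  if s then pX j else pXi j

lemma repr_op (hf : Smo f) (hξ : ξ ≠ 0) (s : Bool) :
    opOf s j f x ξ = fderiv ℝ (Unc f) (x, ξ) (vecOf s j) := by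
  cases s
  · exact repr_pXi hf hξ
  · exact repr_pX hf hξ

lemma op_op_repr (hf : Smo f) (hξ : ξ ≠ 0) (s₁ s₂ : Bool) (j₁ j₂ : Fin n) :
    opOf s₁ j₁ (opOf s₂ j₂ f) x ξ
      = fderiv ℝ (fderiv ℝ (Unc f)) (x, ξ) (vecOf s₁ j₁) (vecOf s₂ j₂) := by
  have hagree : ∀ (x' ξ' : Fin n → ℝ), ξ' ≠ 0 →
      opOf s₂ j₂ f x' ξ' = fderiv ℝ (Unc f) (x', ξ') (vecOf s₂ j₂) :=
    fun x' ξ' hξ' => repr_op hf hξ' s₂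
  cases s₁
  · calc pXi j₁ (opOf s₂ j₂ f) x ξ
        = fderiv ℝ (fun p => fderiv ℝ (Unc f) p (vecOf s₂ j₂)) (x, ξ) (0, Pi.single j₁ 1) :=
          slice2_fderiv (diffAt_applyG hf hξ _) hξ hagree _
      _ = _ := fderiv_applyG hf hξ _ _
  · calc pX j₁ (opOf s₂ j₂ f) x ξ
        = fderiv ℝ (fun p => fderiv ℝ (Unc f) p (vecOf s₂ j₂)) (x, ξ) (Pi.single j₁ 1, 0) :=
          slice1_fderiv (diffAt_applyG hf hξ _) hξ hagree _
      _ = _ := fderiv_applyG hf hξ _ _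

lemma op_comm (hf : Smo f) (hξ : ξ ≠ 0) (s₁ s₂ : Bool) (j₁ j₂ : Fin n) :
    opOf s₁ j₁ (opOf s₂ j₂ f) x ξ = opOf s₂ j₂ (opOf s₁ j₁ f) x ξ := by
  rw [op_op_repr hf hξ, op_op_repr hf hξ, symm2 hf hξ]

lemma comm_pXi_pX (hf : Smo f) (hξ : ξ ≠ 0) (i j : Fin n) :
    pXi i (pX j f) x ξ = pX j (pXi i f) x ξ :=
  op_comm hf hξ false true i j

/-! ### periodicity -/

lemma fderiv_translate (g : (Fin n → ℝ) → ℂ) (c v : Fin n → ℝ) :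
    fderiv ℝ (fun y => g (y + c)) v = fderiv ℝ g (v + c) := by
  by_cases h : DifferentiableAt ℝ g (v + c)
  · have hc : HasFDerivAt (fun y : Fin n → ℝ => y + c)
        (ContinuousLinearMap.id ℝ (Fin n → ℝ)) v := (hasFDerivAt_id v).add_const c
    have := (h.hasFDerivAt.comp v hc).fderiv
    rw [show (fun y => g (y + c)) = g ∘ (fun y : Fin n → ℝ => y + c) from rfl, this,
      ContinuousLinearMap.comp_id]
  · have h2 : ¬ DifferentiableAt ℝ (fun y => g (y + c)) v := by
      intro hd
      apply h
      have hc : DifferentiableAt ℝ (fun y : Fin n → ℝ => y - c) (v + c) :=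
        differentiableAt_id.sub_const c
      have := DifferentiableAt.comp (v + c)
        (by simpa using hd : DifferentiableAt ℝ (fun y => g (y + c)) ((v + c) - c)) hc
      have he : ((fun y => g (y + c)) ∘ (fun y : Fin n → ℝ => y - c)) = g := by
        funext y; simp only [Function.comp_apply, sub_add_cancel]
      rwa [he] at this
    rw [fderiv_zero_of_not_differentiableAt h, fderiv_zero_of_not_differentiableAt h2]

def PerF (u : (Fin n → ℝ) → ℂ) : Prop :=
  ∀ (v : Fin n → ℝ) (k : Fin n), u (v + Pi.single k (2 * π)) = u v

lemma PerF.pd {u : (Fin n → ℝ) → ℂ} (hu : PerF u) (ℓ : Fin n) :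
    PerF (partialDeriv n ℓ u) := by
  intro v k
  have he : (fun y => u (y + Pi.single k (2 * π))) = u := by
    funext y; exact hu y k
  show fderiv ℝ u (v + Pi.single k (2 * π)) (Pi.single ℓ 1) = fderiv ℝ u v (Pi.single ℓ 1)
  rw [← fderiv_translate u (Pi.single k (2 * π)) v, he]

lemma PerF.pdIterate {u : (Fin n → ℝ) → ℂ} (hu : PerF u) (ℓ : Fin n) (m : ℕ) :
    PerF ((partialDeriv n ℓ)^[m] u) := by
  induction m with
  | zero => simpa using hu
  | succ m ih => rw [Function.iterate_succ_apply']; exact ih.pd ℓ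

lemma PerF.It {u : (Fin n → ℝ) → ℂ} (hu : PerF u) (L : List (Fin n)) (γ : Fin n → ℕ) :
    PerF (It L γ u) := by
  induction L with
  | nil => exact hu
  | cons a L ih => rw [It_cons]; exact ih.pdIterate a (γ a)

lemma perf_pXi (hf : Perf f) : Perf (pXi j f) := by
  intro x ξ k
  have : f (x + Pi.single k (2 * π)) = f x := funext fun ξ' => hf x ξ' k
  show partialDeriv n j (f (x + Pi.single k (2 * π))) ξ = partialDeriv n j (f x) ξ
  rw [this]

lemma perf_pX (hf : Perf f) : Perf (pX j f) := by
  intro x ξ k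
  have hP : PerF (fun x' => f x' ξ) := fun v k' => hf v ξ k'
  exact hP.pd j x k

/-! ### homogeneity -/

lemma fderiv_cmul (c : ℂ) (hc : c ≠ 0) (g : (Fin n → ℝ) → ℂ) (v : Fin n → ℝ) :
    fderiv ℝ (fun y => c * g y) v = c • fderiv ℝ g v := by
  by_cases h : DifferentiableAt ℝ g v
  · exact fderiv_const_mul h c
  · have h2 : ¬ DifferentiableAt ℝ (fun y => c * g y) v := by
      intro hd
      apply h
      have := hd.const_mul c⁻¹
      simp only [← mul_assoc, inv_mul_cancel₀ hc, one_mul] at this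
      exact this
    rw [fderiv_zero_of_not_differentiableAt h, fderiv_zero_of_not_differentiableAt h2]
    ext w
    simp

lemma pd_cmul (c : ℂ) (hc : c ≠ 0) (g : (Fin n → ℝ) → ℂ) (ℓ : Fin n) :
    partialDeriv n ℓ (fun y => c * g y) = fun v => c * partialDeriv n ℓ g v := by
  funext v
  show fderiv ℝ (fun y => c * g y) v (Pi.single ℓ 1) = c * fderiv ℝ g v (Pi.single ℓ 1)
  rw [fderiv_cmul c hc]
  rfl

lemma pd_iterate_cmul (c : ℂ) (hc : c ≠ 0) (g : (Fin n → ℝ) → ℂ) (ℓ : Fin n) (m : ℕ) :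
    (partialDeriv n ℓ)^[m] (fun y => c * g y) = fun v => c * (partialDeriv n ℓ)^[m] g v := by
  induction m generalizing g with
  | zero => simp
  | succ m ih => rw [Function.iterate_succ_apply, pd_cmul c hc, ih, Function.iterate_succ_apply]

lemma It_cmul (c : ℂ) (hc : c ≠ 0) (g : (Fin n → ℝ) → ℂ) (L : List (Fin n)) (γ : Fin n → ℕ) :
    It L γ (fun y => c * g y) = fun v => c * It L γ g v := by
  induction L generalizing g with
  | nil => rfl
  | cons a L ih => rw [It_cons, ih, pd_iterate_cmul c hc, It_cons]

lemma hom_pX {d : ℤ} (hh : Hom d f) : Hom d (pX j f) := by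
  intro x t ht ξ hξ
  have hslice : (fun x' => f x' (t • ξ)) = fun x' => ((t : ℂ) ^ d) * f x' ξ := by
    funext x'; exact hh x' t ht ξ hξ
  have hc : ((t : ℂ) ^ d) ≠ 0 := zpow_ne_zero d (by exact_mod_cast ht.ne')
  show partialDeriv n j (fun x' => f x' (t • ξ)) x = _
  rw [hslice]
  show fderiv ℝ (fun x' => ((t:ℂ)^d) * f x' ξ) x (Pi.single j 1) = _
  rw [fderiv_cmul _ hc]
  rfl

lemma hom_pXi {d : ℤ} (hf : Smo f) (hh : Hom d f) : Hom (d - 1) (pXi j f) := by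
  intro x t ht ξ hξ
  have htξ : t • ξ ≠ 0 := smul_ne_zero ht.ne' hξ
  have hev : (fun ξ' => f x (t • ξ')) =ᶠ[nhds ξ] fun ξ' => ((t : ℂ) ^ d) * f x ξ' := by
    filter_upwards [isOpen_compl_singleton.mem_nhds hξ] with ξ' hξ'
    exact hh x t ht ξ' hξ'
  have hsc : HasFDerivAt (fun ξ' : Fin n → ℝ => t • ξ')
      (t • ContinuousLinearMap.id ℝ (Fin n → ℝ)) ξ := (hasFDerivAt_id ξ).const_smul t
  have hcomp : HasFDerivAt (fun ξ' => f x (t • ξ'))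
      ((fderiv ℝ (f x) (t • ξ)).comp (t • ContinuousLinearMap.id ℝ (Fin n → ℝ))) ξ :=
    (diffAt_slice2 hf htξ).hasFDerivAt.comp ξ hsc
  have hR : fderiv ℝ (fun ξ' => ((t : ℂ) ^ d) * f x ξ') ξ = ((t:ℂ)^d) • fderiv ℝ (f x) ξ :=
    fderiv_cmul _ (zpow_ne_zero d (by exact_mod_cast ht.ne')) _ ξ
  have key : fderiv ℝ (fun ξ' => f x (t • ξ')) ξ
      = fderiv ℝ (fun ξ' => ((t : ℂ) ^ d) * f x ξ') ξ := hev.fderiv_eq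
  rw [hcomp.fderiv, hR] at key
  have key2 := DFunLike.congr_fun key (Pi.single j 1)
  simp only [ContinuousLinearMap.coe_comp', Function.comp_apply,
    ContinuousLinearMap.smul_apply, ContinuousLinearMap.coe_id', id_eq] at key2
  rw [map_smul] at key2
  have ht0 : (t : ℂ) ≠ 0 := by exact_mod_cast ht.ne'
  have key3 : (t : ℂ) * fderiv ℝ (f x) (t • ξ) (Pi.single j 1)
      = ((t:ℂ)^d) * fderiv ℝ (f x) ξ (Pi.single j 1) := by
    simpa [Complex.real_smul, smul_eq_mul] using key2
  show fderiv ℝ (f x) (t • ξ) (Pi.single j 1) = ((t:ℂ)^(d-1)) * fderiv ℝ (f x) ξ (Pi.single j 1)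
  have hout : fderiv ℝ (f x) (t • ξ) (Pi.single j 1)
      = (t:ℂ)⁻¹ * (((t:ℂ)^d) * fderiv ℝ (f x) ξ (Pi.single j 1)) := by
    rw [← key3, ← mul_assoc, inv_mul_cancel₀ ht0, one_mul]
  rw [hout, zpow_sub_one₀ ht0]
  ring

/-! ### product rule and congruence -/

lemma pXi_mul (hf : Smo f) (hg : Smo g) (hξ : ξ ≠ 0) :
    pXi j (fun x' ξ' => f x' ξ' * g x' ξ') x ξ
      = pXi j f x ξ * g x ξ + f x ξ * pXi j g x ξ := by
  show fderiv ℝ (fun ξ' => f x ξ' * g x ξ') ξ (Pi.single j 1) = _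
  rw [fderiv_fun_mul (diffAt_slice2 hf hξ) (diffAt_slice2 hg hξ)]
  show f x ξ • fderiv ℝ (g x) ξ (Pi.single j 1) + g x ξ • fderiv ℝ (f x) ξ (Pi.single j 1)
      = fderiv ℝ (f x) ξ (Pi.single j 1) * g x ξ + f x ξ * fderiv ℝ (g x) ξ (Pi.single j 1)
  simp only [smul_eq_mul]
  ring

lemma pX_mul (hf : Smo f) (hg : Smo g) (hξ : ξ ≠ 0) :
    pX j (fun x' ξ' => f x' ξ' * g x' ξ') x ξ
      = pX j f x ξ * g x ξ + f x ξ * pX j g x ξ := by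
  show fderiv ℝ (fun x' => f x' ξ * g x' ξ) x (Pi.single j 1) = _
  rw [fderiv_fun_mul (diffAt_slice1 hf hξ) (diffAt_slice1 hg hξ)]
  show f x ξ • fderiv ℝ (fun x' => g x' ξ) x (Pi.single j 1)
      + g x ξ • fderiv ℝ (fun x' => f x' ξ) x (Pi.single j 1)
      = fderiv ℝ (fun x' => f x' ξ) x (Pi.single j 1) * g x ξ
        + f x ξ * fderiv ℝ (fun x' => g x' ξ) x (Pi.single j 1)
  simp only [smul_eq_mul]
  ring

lemma pXi_congrU (h : ∀ (x' ξ' : Fin n → ℝ), ξ' ≠ 0 → f x' ξ' = g x' ξ') (hξ : ξ ≠ 0) :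
    pXi j f x ξ = pXi j g x ξ := by
  have hev : f x =ᶠ[nhds ξ] g x := by
    filter_upwards [isOpen_compl_singleton.mem_nhds hξ] with ξ' hξ'
    exact h x ξ' hξ'
  show fderiv ℝ (f x) ξ (Pi.single j 1) = fderiv ℝ (g x) ξ (Pi.single j 1)
  rw [hev.fderiv_eq]

lemma pX_congrU (h : ∀ (x' ξ' : Fin n → ℝ), ξ' ≠ 0 → f x' ξ' = g x' ξ') (hξ : ξ ≠ 0) :
    pX j f x ξ = pX j g x ξ := by
  have : (fun x' => f x' ξ) = fun x' => g x' ξ := funext fun x' => h x' ξ hξ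
  show partialDeriv n j (fun x' => f x' ξ) x = partialDeriv n j (fun x' => g x' ξ) x
  rw [this]

end Analytic

section Iterated

variable {f g : (Fin n → ℝ) → (Fin n → ℝ) → ℂ} {x ξ : Fin n → ℝ} {j : Fin n}
variable {γ : Fin n → ℕ}

lemma exists_max_idx (h : ∑ i, γ i ≠ 0) :
    ∃ j : Fin n, γ j ≠ 0 ∧ ∀ i, j < i → γ i = 0 := by
  have hne : (Finset.univ.filter (fun i => γ i ≠ 0)).Nonempty := by
    by_contra hc
    rw [Finset.not_nonempty_iff_eq_empty] at hc
    apply h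
    apply Finset.sum_eq_zero
    intro i _
    by_contra hi
    have : i ∈ Finset.univ.filter (fun i => γ i ≠ 0) := by simp [hi]
    simp [hc] at this
  refine ⟨(Finset.univ.filter (fun i => γ i ≠ 0)).max' hne, ?_, ?_⟩
  · have := (Finset.univ.filter (fun i => γ i ≠ 0)).max'_mem hne
    simpa using this
  · intro i hi
    by_contra hgi
    have hmem : i ∈ Finset.univ.filter (fun i => γ i ≠ 0) := by simp [hgi]
    exact absurd (Finset.le_max' _ i hmem) (not_le.2 hi)

lemma exists_min_idx (h : ∑ i, γ i ≠ 0) :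
    ∃ m : Fin n, γ m ≠ 0 ∧ ∀ i, i < m → γ i = 0 := by
  have hne : (Finset.univ.filter (fun i => γ i ≠ 0)).Nonempty := by
    by_contra hc
    rw [Finset.not_nonempty_iff_eq_empty] at hc
    apply h
    apply Finset.sum_eq_zero
    intro i _
    by_contra hi
    have : i ∈ Finset.univ.filter (fun i => γ i ≠ 0) := by simp [hi]
    simp [hc] at this
  refine ⟨(Finset.univ.filter (fun i => γ i ≠ 0)).min' hne, ?_, ?_⟩
  · have := (Finset.univ.filter (fun i => γ i ≠ 0)).min'_mem hne
    simpa using this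
  · intro i hi
    by_contra hgi
    have hmem : i ∈ Finset.univ.filter (fun i => γ i ≠ 0) := by simp [hgi]
    exact absurd (Finset.min'_le _ i hmem) (not_le.2 hi)

lemma sum_update_pred {j : Fin n} (hj : γ j ≠ 0) :
    (∑ i, Function.update γ j (γ j - 1) i) = (∑ i, γ i) - 1 := by
  rw [Finset.sum_update_of_mem (Finset.mem_univ j), Finset.sdiff_singleton_eq_erase]
  rw [← Finset.add_sum_erase Finset.univ γ (Finset.mem_univ j)]
  have := Nat.pos_of_ne_zero hj
  omega

lemma partialXi_zero (h : ∀ i, γ i = 0) : partialXi n γ f = f := by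
  funext x
  exact pdIter_zero h (f x)

lemma partialX_zero (h : ∀ i, γ i = 0) : partialX n γ f = f := by
  funext x ξ
  show partialDerivIter n γ (fun x' => f x' ξ) x = f x ξ
  rw [pdIter_zero h]

lemma partialXi_peel_inner {j : Fin n} (hj : γ j ≠ 0) (hmax : ∀ i, j < i → γ i = 0) :
    partialXi n γ f = partialXi n (Function.update γ j (γ j - 1)) (pXi j f) := by
  funext x
  exact pdIter_peel_inner hj hmax (f x)

lemma partialX_peel_inner {j : Fin n} (hj : γ j ≠ 0) (hmax : ∀ i, j < i → γ i = 0) :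
    partialX n γ f = partialX n (Function.update γ j (γ j - 1)) (pX j f) := by
  funext x ξ
  show partialDerivIter n γ (fun x' => f x' ξ) x = _
  rw [pdIter_peel_inner hj hmax]
  rfl

lemma partialXi_peel_outer {m : Fin n} (hm : γ m ≠ 0) (hmin : ∀ i, i < m → γ i = 0) :
    partialXi n γ f = pXi m (partialXi n (Function.update γ m (γ m - 1)) f) := by
  funext x
  exact pdIter_peel_outer hm hmin (f x)

lemma partialX_peel_outer {m : Fin n} (hm : γ m ≠ 0) (hmin : ∀ i, i < m → γ i = 0) :
    partialX n γ f = pX m (partialX n (Function.update γ m (γ m - 1)) f) := by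
  funext x ξ
  show partialDerivIter n γ (fun x' => f x' ξ) x = _
  rw [pdIter_peel_outer hm hmin]
  rfl

/-- joint smoothness is preserved by the iterated operators -/
lemma smo_iter : ∀ (s : ℕ) (γ : Fin n → ℕ), (∑ i, γ i) = s →
    ∀ (f : (Fin n → ℝ) → (Fin n → ℝ) → ℂ), Smo f →
      Smo (partialXi n γ f) ∧ Smo (partialX n γ f) := by
  intro s
  induction s with
  | zero =>
      intro γ hγ f hf
      have h0 : ∀ i, γ i = 0 := by
        intro i
        exact Finset.sum_eq_zero_iff.1 hγ i (Finset.mem_univ i)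
      rw [partialXi_zero h0, partialX_zero h0]
      exact ⟨hf, hf⟩
  | succ s ih =>
      intro γ hγ f hf
      obtain ⟨m, hm, hmin⟩ := exists_min_idx (by omega : ∑ i, γ i ≠ 0)
      have hsum' : (∑ i, Function.update γ m (γ m - 1) i) = s := by
        rw [sum_update_pred hm, hγ]; omega
      obtain ⟨h1, h2⟩ := ih _ hsum' f hf
      constructor
      · rw [partialXi_peel_outer hm hmin]
        exact smo_pXi h1
      · rw [partialX_peel_outer hm hmin]
        exact smo_pX h2

lemma smo_partialXi (hf : Smo f) : Smo (partialXi n γ f) :=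
  (smo_iter _ γ rfl f hf).1

lemma smo_partialX (hf : Smo f) : Smo (partialX n γ f) :=
  (smo_iter _ γ rfl f hf).2

/-- periodicity -/
lemma perf_partialXi (hf : Perf f) : Perf (partialXi n γ f) := by
  intro x ξ k
  have : f (x + Pi.single k (2 * π)) = f x := funext fun ξ' => hf x ξ' k
  show partialDerivIter n γ (f (x + Pi.single k (2 * π))) ξ = partialDerivIter n γ (f x) ξ
  rw [this]

lemma perf_partialX (hf : Perf f) : Perf (partialX n γ f) := by
  intro x ξ k
  have hP : PerF (fun x' => f x' ξ) := fun v k' => hf v ξ k'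
  exact (hP.It (List.finRange n) γ) x k

/-- homogeneity -/
lemma hom_partialX {d : ℤ} (hh : Hom d f) : Hom d (partialX n γ f) := by
  intro x t ht ξ hξ
  have hslice : (fun x' => f x' (t • ξ)) = fun x' => ((t : ℂ) ^ d) * f x' ξ := by
    funext x'; exact hh x' t ht ξ hξ
  have hc : ((t : ℂ) ^ d) ≠ 0 := zpow_ne_zero d (by exact_mod_cast ht.ne')
  show partialDerivIter n γ (fun x' => f x' (t • ξ)) x = _
  rw [hslice, pdIter_eq_It, It_cmul _ hc]
  rfl

lemma hom_partialXi : ∀ (s : ℕ) (γ : Fin n → ℕ), (∑ i, γ i) = s →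
    ∀ (d : ℤ) (f : (Fin n → ℝ) → (Fin n → ℝ) → ℂ), Smo f → Hom d f →
      Hom (d - (s : ℤ)) (partialXi n γ f) := by
  intro s
  induction s with
  | zero =>
      intro γ hγ d f hf hh
      have h0 : ∀ i, γ i = 0 := fun i => Finset.sum_eq_zero_iff.1 hγ i (Finset.mem_univ i)
      rw [partialXi_zero h0]
      simpa using hh
  | succ s ih =>
      intro γ hγ d f hf hh
      obtain ⟨m, hm, hmin⟩ := exists_min_idx (by omega : ∑ i, γ i ≠ 0)
      have hsum' : (∑ i, Function.update γ m (γ m - 1) i) = s := by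
        rw [sum_update_pred hm, hγ]; omega
      rw [partialXi_peel_outer hm hmin]
      have h1 := ih _ hsum' d f hf hh
      have h2 := hom_pXi (j := m) (smo_iter _ _ hsum' f hf).1 h1
      have : d - (s : ℤ) - 1 = d - ((s + 1 : ℕ) : ℤ) := by push_cast; ring
      rwa [this] at h2

/-- congruence on U -/
lemma pd_congr_open {u v : (Fin n → ℝ) → ℂ} {s : Set (Fin n → ℝ)} (hs : IsOpen s)
    (h : ∀ y ∈ s, u y = v y) (ℓ : Fin n) :
    ∀ y ∈ s, partialDeriv n ℓ u y = partialDeriv n ℓ v y := by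
  intro y hy
  have hev : u =ᶠ[nhds y] v := by
    filter_upwards [hs.mem_nhds hy] with z hz
    exact h z hz
  show fderiv ℝ u y (Pi.single ℓ 1) = fderiv ℝ v y (Pi.single ℓ 1)
  rw [hev.fderiv_eq]

lemma pd_iterate_congr_open {u v : (Fin n → ℝ) → ℂ} {s : Set (Fin n → ℝ)} (hs : IsOpen s)
    (h : ∀ y ∈ s, u y = v y) (ℓ : Fin n) (m : ℕ) :
    ∀ y ∈ s, (partialDeriv n ℓ)^[m] u y = (partialDeriv n ℓ)^[m] v y := by
  induction m generalizing u v with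
  | zero => simpa using h
  | succ m ihm =>
      rw [Function.iterate_succ_apply, Function.iterate_succ_apply]
      exact fun y hy => ihm (pd_congr_open hs h ℓ) y hy

lemma It_congr_open {u v : (Fin n → ℝ) → ℂ} {s : Set (Fin n → ℝ)} (hs : IsOpen s)
    (h : ∀ y ∈ s, u y = v y) (L : List (Fin n)) (γ : Fin n → ℕ) :
    ∀ y ∈ s, It L γ u y = It L γ v y := by
  induction L generalizing u v with
  | nil => exact h
  | cons a L ihL =>
      rw [It_cons, It_cons]
      exact fun y hy => pd_iterate_congr_open hs (ihL h) a (γ a) y hy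

lemma partialXi_congrU (h : ∀ (x' ξ' : Fin n → ℝ), ξ' ≠ 0 → f x' ξ' = g x' ξ')
    (hξ : ξ ≠ 0) : partialXi n γ f x ξ = partialXi n γ g x ξ := by
  have := It_congr_open (s := {ξ' : Fin n → ℝ | ξ' ≠ 0}) isOpen_compl_singleton
    (fun y hy => h x y hy) (List.finRange n) γ ξ hξ
  exact this

lemma partialX_congrU (h : ∀ (x' ξ' : Fin n → ℝ), ξ' ≠ 0 → f x' ξ' = g x' ξ')
    (hξ : ξ ≠ 0) : partialX n γ f x ξ = partialX n γ g x ξ := by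
  have : (fun x' => f x' ξ) = fun x' => g x' ξ := funext fun x' => h x' ξ hξ
  show partialDerivIter n γ (fun x' => f x' ξ) x = partialDerivIter n γ (fun x' => g x' ξ) x
  rw [this]

/-- single ops commute past the iterated operators, on U -/
lemma op_comm_partialX : ∀ (s : ℕ) (γ : Fin n → ℕ), (∑ i, γ i) = s →
    ∀ (f : (Fin n → ℝ) → (Fin n → ℝ) → ℂ), Smo f → ∀ (b : Bool) (j : Fin n)
      (x ξ : Fin n → ℝ), ξ ≠ 0 →
      opOf b j (partialX n γ f) x ξ = partialX n γ (opOf b j f) x ξ := by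
  intro s
  induction s with
  | zero =>
      intro γ hγ f hf b j x ξ hξ
      have h0 : ∀ i, γ i = 0 := fun i => Finset.sum_eq_zero_iff.1 hγ i (Finset.mem_univ i)
      rw [partialX_zero h0, partialX_zero h0]
  | succ s ih =>
      intro γ hγ f hf b j x ξ hξ
      obtain ⟨m, hm, hmin⟩ := exists_min_idx (by omega : ∑ i, γ i ≠ 0)
      have hsum' : (∑ i, Function.update γ m (γ m - 1) i) = s := by
        rw [sum_update_pred hm, hγ]; omega
      have hsmo' : Smo (partialX n (Function.update γ m (γ m - 1)) f) :=
        (smo_iter _ _ hsum' f hf).2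
      rw [partialX_peel_outer hm hmin, partialX_peel_outer (f := opOf b j f) hm hmin]
      have step1 : opOf b j (pX m (partialX n (Function.update γ m (γ m - 1)) f)) x ξ
          = pX m (opOf b j (partialX n (Function.update γ m (γ m - 1)) f)) x ξ :=
        op_comm hsmo' hξ b true j m
      rw [step1]
      exact pX_congrU (fun x' ξ' hξ' => ih _ hsum' f hf b j x' ξ' hξ') hξ

lemma op_comm_partialXi : ∀ (s : ℕ) (γ : Fin n → ℕ), (∑ i, γ i) = s →
    ∀ (f : (Fin n → ℝ) → (Fin n → ℝ) → ℂ), Smo f → ∀ (b : Bool) (j : Fin n)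
      (x ξ : Fin n → ℝ), ξ ≠ 0 →
      opOf b j (partialXi n γ f) x ξ = partialXi n γ (opOf b j f) x ξ := by
  intro s
  induction s with
  | zero =>
      intro γ hγ f hf b j x ξ hξ
      have h0 : ∀ i, γ i = 0 := fun i => Finset.sum_eq_zero_iff.1 hγ i (Finset.mem_univ i)
      rw [partialXi_zero h0, partialXi_zero h0]
  | succ s ih =>
      intro γ hγ f hf b j x ξ hξ
      obtain ⟨m, hm, hmin⟩ := exists_min_idx (by omega : ∑ i, γ i ≠ 0)
      have hsum' : (∑ i, Function.update γ m (γ m - 1) i) = s := by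
        rw [sum_update_pred hm, hγ]; omega
      have hsmo' : Smo (partialXi n (Function.update γ m (γ m - 1)) f) :=
        (smo_iter _ _ hsum' f hf).1
      rw [partialXi_peel_outer hm hmin, partialXi_peel_outer (f := opOf b j f) hm hmin]
      have step1 : opOf b j (pXi m (partialXi n (Function.update γ m (γ m - 1)) f)) x ξ
          = pXi m (opOf b j (partialXi n (Function.update γ m (γ m - 1)) f)) x ξ :=
        op_comm hsmo' hξ b false j m
      rw [step1]
      exact pXi_congrU (fun x' ξ' hξ' => ih _ hsum' f hf b j x' ξ' hξ') hξ

end Iterated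

section Closure

variable {f g : (Fin n → ℝ) → (Fin n → ℝ) → ℂ} {d d₁ d₂ : ℤ}

lemma smo_mul2 (hf : Smo f) (hg : Smo g) : Smo (fun x ξ => f x ξ * g x ξ) := hf.mul hg

lemma smo_zero : Smo (fun _ _ : Fin n → ℝ => (0 : ℂ)) := contDiffOn_const

lemma smo_cmul (c : ℂ) (hf : Smo f) : Smo (fun x ξ => c * f x ξ) := contDiffOn_const.mul hf

lemma perf_mul2 (hf : Perf f) (hg : Perf g) : Perf (fun x ξ => f x ξ * g x ξ) := by
  intro x ξ k; dsimp only; rw [hf x ξ k, hg x ξ k]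

lemma perf_zero : Perf (fun _ _ : Fin n → ℝ => (0 : ℂ)) := fun _ _ _ => rfl

lemma perf_cmul (c : ℂ) (hf : Perf f) : Perf (fun x ξ => c * f x ξ) := by
  intro x ξ k; dsimp only; rw [hf x ξ k]

lemma perf_add {f g} (hf : Perf f) (hg : Perf g) :
    Perf (fun x ξ : Fin n → ℝ => f x ξ + g x ξ) := by
  intro x ξ k; dsimp only; rw [hf x ξ k, hg x ξ k]

lemma hom_mul2 (hf : Hom d₁ f) (hg : Hom d₂ g) :
    Hom (d₁ + d₂) (fun x ξ => f x ξ * g x ξ) := by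
  intro x t ht ξ hξ
  dsimp only
  rw [hf x t ht ξ hξ, hg x t ht ξ hξ, zpow_add₀ (by exact_mod_cast ht.ne' : (t:ℂ) ≠ 0)]
  ring

lemma hom_zero : Hom d (fun _ _ : Fin n → ℝ => (0 : ℂ)) := by
  intro x t ht ξ hξ; dsimp only; rw [mul_zero]

lemma hom_cmul (c : ℂ) (hf : Hom d f) : Hom d (fun x ξ => c * f x ξ) := by
  intro x t ht ξ hξ; dsimp only; rw [hf x t ht ξ hξ]; ring

lemma hom_add {f g} (hf : Hom d f) (hg : Hom d g) :
    Hom d (fun x ξ : Fin n → ℝ => f x ξ + g x ξ) := by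
  intro x t ht ξ hξ; dsimp only; rw [hf x t ht ξ hξ, hg x t ht ξ hξ]; ring

lemma smo_add {f g} (hf : Smo f) (hg : Smo g) :
    Smo (fun x ξ : Fin n → ℝ => f x ξ + g x ξ) := hf.add hg

end Closure

section Main

lemma main_ind : ∀ (s : ℕ) (γ : Fin n → ℕ), (∑ i, γ i) = s →
    ∀ (a b : ℤ) (f g : (Fin n → ℝ) → (Fin n → ℝ) → ℂ),
      Smo f → Perf f → Hom a f → Smo g → Perf g → Hom b g →
    ∃ A B : Fin n → (Fin n → ℝ) → (Fin n → ℝ) → ℂ,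
      (∀ ℓ, Smo (A ℓ)) ∧ (∀ ℓ, Smo (B ℓ)) ∧ (∀ ℓ, Perf (A ℓ)) ∧ (∀ ℓ, Perf (B ℓ)) ∧
      (∀ ℓ, Hom (a + b - (s : ℤ) + 1) (A ℓ)) ∧ (∀ ℓ, Hom (a + b - (s : ℤ)) (B ℓ)) ∧
      (∀ x ξ : Fin n → ℝ, ξ ≠ 0 →
        partialXi n γ f x ξ * partialX n γ g x ξ
          - partialX n γ f x ξ * partialXi n γ g x ξ
        = ∑ ℓ, (fderiv ℝ (A ℓ x) ξ (Pi.single ℓ 1)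
            + (-Complex.I) * fderiv ℝ (fun x' => B ℓ x' ξ) x (Pi.single ℓ 1))) := by
  intro s
  induction s with
  | zero =>
      intro γ hγ a b f g hsf hpf hhf hsg hpg hhg
      have h0 : ∀ i, γ i = 0 := fun i => Finset.sum_eq_zero_iff.1 hγ i (Finset.mem_univ i)
      refine ⟨fun _ _ _ => 0, fun _ _ _ => 0, fun _ => smo_zero, fun _ => smo_zero,
        fun _ => perf_zero, fun _ => perf_zero, fun _ => hom_zero, fun _ => hom_zero, ?_⟩
      intro x ξ hξ
      rw [partialXi_zero h0, partialX_zero h0, partialXi_zero h0, partialX_zero h0]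
      simp
  | succ s ih =>
      intro γ hγ a b f g hsf hpf hhf hsg hpg hhg
      obtain ⟨j, hj, hmax⟩ := exists_max_idx (by omega : ∑ i, γ i ≠ 0)
      set γ' := Function.update γ j (γ j - 1) with hγ'def
      have hsum' : (∑ i, γ' i) = s := by rw [hγ'def, sum_update_pred hj, hγ]; omega
      -- pieces
      set u := partialX n γ' f with hu
      set v := partialXi n γ' g with hv
      have hsu : Smo u := smo_partialX hsf
      have hsv : Smo v := smo_partialXi hsg
      have hpu : Perf u := perf_partialX hpf
      have hpv : Perf v := perf_partialXi hpg
      have hhu : Hom a u := hom_partialX hhf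
      have hhv : Hom (b - (s : ℤ)) v := hom_partialXi s γ' hsum' b g hsg hhg
      -- induction hypothesis applied to (pXi j f, pX j g)
      obtain ⟨A₁, B₁, hsA₁, hsB₁, hpA₁, hpB₁, hhA₁, hhB₁, heq₁⟩ :=
        ih γ' hsum' (a - 1) b (pXi j f) (pX j g)
          (smo_pXi hsf) (perf_pXi hpf) (hom_pXi hsf hhf)
          (smo_pX hsg) (perf_pX hpg) (hom_pX hhg)
      -- explicit second piece
      set A₂ : Fin n → (Fin n → ℝ) → (Fin n → ℝ) → ℂ :=
        fun ℓ => if ℓ = j then (fun x ξ => u x ξ * pX j v x ξ) else (fun _ _ => 0) with hA₂def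
      set B₂ : Fin n → (Fin n → ℝ) → (Fin n → ℝ) → ℂ :=
        fun ℓ => if ℓ = j then (fun x ξ => (-Complex.I) * (u x ξ * pXi j v x ξ))
          else (fun _ _ => 0) with hB₂def
      have hsA₂ : ∀ ℓ, Smo (A₂ ℓ) := by
        intro ℓ; rw [hA₂def]; by_cases h : ℓ = j
        · simp only [h, if_pos rfl]; exact smo_mul2 hsu (smo_pX hsv)
        · simp only [if_neg h]; exact smo_zero
      have hsB₂ : ∀ ℓ, Smo (B₂ ℓ) := by
        intro ℓ; rw [hB₂def]; by_cases h : ℓ = j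
        · simp only [h, if_pos rfl]; exact smo_cmul _ (smo_mul2 hsu (smo_pXi hsv))
        · simp only [if_neg h]; exact smo_zero
      have hpA₂ : ∀ ℓ, Perf (A₂ ℓ) := by
        intro ℓ; rw [hA₂def]; by_cases h : ℓ = j
        · simp only [h, if_pos rfl]; exact perf_mul2 hpu (perf_pX hpv)
        · simp only [if_neg h]; exact perf_zero
      have hpB₂ : ∀ ℓ, Perf (B₂ ℓ) := by
        intro ℓ; rw [hB₂def]; by_cases h : ℓ = j
        · simp only [h, if_pos rfl]; exact perf_cmul _ (perf_mul2 hpu (perf_pXi hpv))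
        · simp only [if_neg h]; exact perf_zero
      have hhA₂ : ∀ ℓ, Hom (a + b - ((s+1 : ℕ) : ℤ) + 1) (A₂ ℓ) := by
        intro ℓ; rw [hA₂def]; by_cases h : ℓ = j
        · simp only [h, if_pos rfl]
          have := hom_mul2 hhu (hom_pX (j := j) hhv)
          have harr : a + (b - (s : ℤ)) = a + b - ((s+1 : ℕ) : ℤ) + 1 := by push_cast; ring
          rwa [harr] at this
        · simp only [if_neg h]; exact hom_zero
      have hhB₂ : ∀ ℓ, Hom (a + b - ((s+1 : ℕ) : ℤ)) (B₂ ℓ) := by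
        intro ℓ; rw [hB₂def]; by_cases h : ℓ = j
        · simp only [h, if_pos rfl]
          have := hom_cmul (-Complex.I) (hom_mul2 hhu (hom_pXi (j := j) hsv hhv))
          have harr : a + (b - (s : ℤ) - 1) = a + b - ((s+1 : ℕ) : ℤ) := by push_cast; ring
          rwa [harr] at this
        · simp only [if_neg h]; exact hom_zero
      -- exponent alignment for A₁ B₁
      have hexpA : (a - 1) + b - (s : ℤ) + 1 = a + b - ((s+1 : ℕ) : ℤ) + 1 := by push_cast; ring
      have hexpB : (a - 1) + b - (s : ℤ) = a + b - ((s+1 : ℕ) : ℤ) := by push_cast; ring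
      refine ⟨fun ℓ x ξ => A₁ ℓ x ξ + A₂ ℓ x ξ, fun ℓ x ξ => B₁ ℓ x ξ + B₂ ℓ x ξ,
        fun ℓ => smo_add (hsA₁ ℓ) (hsA₂ ℓ), fun ℓ => smo_add (hsB₁ ℓ) (hsB₂ ℓ),
        fun ℓ => perf_add (hpA₁ ℓ) (hpA₂ ℓ), fun ℓ => perf_add (hpB₁ ℓ) (hpB₂ ℓ),
        fun ℓ => hom_add (hexpA ▸ hhA₁ ℓ) (hhA₂ ℓ),
        fun ℓ => hom_add (hexpB ▸ hhB₁ ℓ) (hhB₂ ℓ), ?_⟩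
      intro x ξ hξ
      -- peel the iterated operators
      rw [partialXi_peel_inner (f := f) hj hmax, partialX_peel_inner (f := g) hj hmax,
        partialX_peel_inner (f := f) hj hmax, partialXi_peel_inner (f := g) hj hmax]
      -- commute single operators out
      have e1 : partialX n γ' (pXi j f) x ξ = pXi j u x ξ :=
        (op_comm_partialX s γ' hsum' f hsf false j x ξ hξ).symm
      have e2 : partialXi n γ' (pX j g) x ξ = pX j v x ξ :=
        (op_comm_partialXi s γ' hsum' g hsg true j x ξ hξ).symm
      have e3 : partialX n γ' (pX j f) x ξ = pX j u x ξ :=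
        (op_comm_partialX s γ' hsum' f hsf true j x ξ hξ).symm
      have e4 : partialXi n γ' (pXi j g) x ξ = pXi j v x ξ :=
        (op_comm_partialXi s γ' hsum' g hsg false j x ξ hξ).symm
      have hIH := heq₁ x ξ hξ
      -- one-step bracket
      have hprod1 : pXi j (fun x' ξ' => u x' ξ' * pX j v x' ξ') x ξ
          = pXi j u x ξ * pX j v x ξ + u x ξ * pXi j (pX j v) x ξ :=
        pXi_mul hsu (smo_pX hsv) hξ
      have hprod2 : pX j (fun x' ξ' => u x' ξ' * pXi j v x' ξ') x ξ
          = pX j u x ξ * pXi j v x ξ + u x ξ * pX j (pXi j v) x ξ :=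
        pX_mul hsu (smo_pXi hsv) hξ
      have hcomm : pXi j (pX j v) x ξ = pX j (pXi j v) x ξ := comm_pXi_pX hsv hξ j j
      -- compute the new sum
      have hsumA : (∑ ℓ, (fderiv ℝ (fun ξ' => A₁ ℓ x ξ' + A₂ ℓ x ξ') ξ (Pi.single ℓ 1)
            + (-Complex.I) * fderiv ℝ (fun x' => B₁ ℓ x' ξ + B₂ ℓ x' ξ) x (Pi.single ℓ 1)))
          = (∑ ℓ, (fderiv ℝ (A₁ ℓ x) ξ (Pi.single ℓ 1)
            + (-Complex.I) * fderiv ℝ (fun x' => B₁ ℓ x' ξ) x (Pi.single ℓ 1)))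
          + (∑ ℓ, (fderiv ℝ (A₂ ℓ x) ξ (Pi.single ℓ 1)
            + (-Complex.I) * fderiv ℝ (fun x' => B₂ ℓ x' ξ) x (Pi.single ℓ 1))) := by
        rw [← Finset.sum_add_distrib]
        apply Finset.sum_congr rfl
        intro ℓ _
        rw [fderiv_fun_add (diffAt_slice2 (hsA₁ ℓ) hξ) (diffAt_slice2 (hsA₂ ℓ) hξ),
          fderiv_fun_add (diffAt_slice1 (hsB₁ ℓ) hξ) (diffAt_slice1 (hsB₂ ℓ) hξ)]
        simp only [ContinuousLinearMap.add_apply]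
        ring
      have hsum2 : (∑ ℓ, (fderiv ℝ (A₂ ℓ x) ξ (Pi.single ℓ 1)
            + (-Complex.I) * fderiv ℝ (fun x' => B₂ ℓ x' ξ) x (Pi.single ℓ 1)))
          = pXi j (fun x' ξ' => u x' ξ' * pX j v x' ξ') x ξ
            - pX j (fun x' ξ' => u x' ξ' * pXi j v x' ξ') x ξ := by
        rw [Finset.sum_eq_single_of_mem j (Finset.mem_univ j)]
        · have hAj : A₂ j = fun x ξ => u x ξ * pX j v x ξ := by rw [hA₂def]; simp
          have hBj : B₂ j = fun x ξ => (-Complex.I) * (u x ξ * pXi j v x ξ) := by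
            rw [hB₂def]; simp
          rw [hAj, hBj]
          have hder : fderiv ℝ (fun x' => (-Complex.I) * (u x' ξ * pXi j v x' ξ)) x
              = (-Complex.I) • fderiv ℝ (fun x' => u x' ξ * pXi j v x' ξ) x :=
            fderiv_cmul (-Complex.I) (by simp [Complex.I_ne_zero]) _ x
          rw [hder]
          show fderiv ℝ (fun ξ' => u x ξ' * pX j v x ξ') ξ (Pi.single j 1)
              + (-Complex.I) * ((-Complex.I) • fderiv ℝ (fun x' => u x' ξ * pXi j v x' ξ) x)
                (Pi.single j 1)
              = pXi j (fun x' ξ' => u x' ξ' * pX j v x' ξ') x ξ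
                - pX j (fun x' ξ' => u x' ξ' * pXi j v x' ξ') x ξ
          have hII : (-Complex.I) * (-Complex.I) = -1 := by
            rw [neg_mul_neg, Complex.I_mul_I]
          show fderiv ℝ (fun ξ' => u x ξ' * pX j v x ξ') ξ (Pi.single j 1)
              + (-Complex.I) * ((-Complex.I) * fderiv ℝ (fun x' => u x' ξ * pXi j v x' ξ) x
                (Pi.single j 1))
              = _
          rw [← mul_assoc, hII]
          show -- reduce pXi/pX to fderiv form
            fderiv ℝ (fun ξ' => u x ξ' * pX j v x ξ') ξ (Pi.single j 1)
              + (-1) * fderiv ℝ (fun x' => u x' ξ * pXi j v x' ξ) x (Pi.single j 1)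
            = fderiv ℝ (fun ξ' => u x ξ' * pX j v x ξ') ξ (Pi.single j 1)
              - fderiv ℝ (fun x' => u x' ξ * pXi j v x' ξ) x (Pi.single j 1)
          ring
        · intro ℓ _ hℓ
          have hAℓ : A₂ ℓ = fun _ _ => 0 := by rw [hA₂def]; simp [hℓ]
          have hBℓ : B₂ ℓ = fun _ _ => 0 := by rw [hB₂def]; simp [hℓ]
          rw [hAℓ, hBℓ]
          show fderiv ℝ (fun _ => (0:ℂ)) ξ (Pi.single ℓ 1)
              + (-Complex.I) * fderiv ℝ (fun _ => (0:ℂ)) x (Pi.single ℓ 1) = 0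
          simp
      rw [hsumA, hsum2, ← hIH, hprod1, hprod2, hcomm, e1, e2, e3, e4]
      ring

end Main

end Bracket

/-- Let `n ≥ 2`, `a, b ∈ ℤ`, and `γ` a multi-index. Let `σ, τ` be smooth on
`ℝⁿ × (ℝⁿ \ {0})`, `2π`-periodic in `x`, positively homogeneous in `ξ` of degrees `a` and `b`.
Then there exist smooth `A_1, …, A_n` and `B_1, …, B_n`, `2π`-periodic in `x`, with `A_ℓ`
homogeneous of degree `a+b−|γ|+1` and `B_ℓ` homogeneous of degree `a+b−|γ|` in `ξ`, such that
`(∂_ξ^γ σ)(D_x^γ τ) − (D_x^γ σ)(∂_ξ^γ τ) = Σ_ℓ ( ∂_{ξ_ℓ} A_ℓ + D_{x_ℓ} B_ℓ )`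
on `ℝⁿ × (ℝⁿ \ {0})`. -/
theorem bracket_eq_sum_of_derivatives
    (n : ℕ) (hn : 2 ≤ n) (a b : ℤ) (γ : Fin n → ℕ)
    (σ τ : (Fin n → ℝ) → (Fin n → ℝ) → ℂ)
    (hσ_smooth : ContDiffOn ℝ (⊤ : ℕ∞)
      (fun p : (Fin n → ℝ) × (Fin n → ℝ) => σ p.1 p.2)
      {p : (Fin n → ℝ) × (Fin n → ℝ) | p.2 ≠ 0})
    (hτ_smooth : ContDiffOn ℝ (⊤ : ℕ∞)
      (fun p : (Fin n → ℝ) × (Fin n → ℝ) => τ p.1 p.2)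
      {p : (Fin n → ℝ) × (Fin n → ℝ) | p.2 ≠ 0})
    (hσ_per : ∀ (x ξ : Fin n → ℝ) (ℓ : Fin n),
      σ (x + Pi.single ℓ (2 * π)) ξ = σ x ξ)
    (hτ_per : ∀ (x ξ : Fin n → ℝ) (ℓ : Fin n),
      τ (x + Pi.single ℓ (2 * π)) ξ = τ x ξ)
    (hσ_homog : ∀ (x : Fin n → ℝ) (t : ℝ), 0 < t → ∀ (ξ : Fin n → ℝ), ξ ≠ 0 →
      σ x (t • ξ) = (t : ℂ) ^ a * σ x ξ)
    (hτ_homog : ∀ (x : Fin n → ℝ) (t : ℝ), 0 < t → ∀ (ξ : Fin n → ℝ), ξ ≠ 0 →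
      τ x (t • ξ) = (t : ℂ) ^ b * τ x ξ) :
    ∃ A B : Fin n → (Fin n → ℝ) → (Fin n → ℝ) → ℂ,
      (∀ ℓ, ContDiffOn ℝ (⊤ : ℕ∞)
        (fun p : (Fin n → ℝ) × (Fin n → ℝ) => A ℓ p.1 p.2)
        {p : (Fin n → ℝ) × (Fin n → ℝ) | p.2 ≠ 0}) ∧
      (∀ ℓ, ContDiffOn ℝ (⊤ : ℕ∞)
        (fun p : (Fin n → ℝ) × (Fin n → ℝ) => B ℓ p.1 p.2)
        {p : (Fin n → ℝ) × (Fin n → ℝ) | p.2 ≠ 0}) ∧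
      (∀ ℓ (x ξ : Fin n → ℝ) (k : Fin n),
        A ℓ (x + Pi.single k (2 * π)) ξ = A ℓ x ξ ∧
        B ℓ (x + Pi.single k (2 * π)) ξ = B ℓ x ξ) ∧
      (∀ ℓ (x : Fin n → ℝ) (t : ℝ), 0 < t → ∀ (ξ : Fin n → ℝ), ξ ≠ 0 →
        A ℓ x (t • ξ) = (t : ℂ) ^ (a + b - (∑ i, γ i : ℕ) + 1) * A ℓ x ξ) ∧
      (∀ ℓ (x : Fin n → ℝ) (t : ℝ), 0 < t → ∀ (ξ : Fin n → ℝ), ξ ≠ 0 →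
        B ℓ x (t • ξ) = (t : ℂ) ^ (a + b - (∑ i, γ i : ℕ)) * B ℓ x ξ) ∧
      (∀ (x ξ : Fin n → ℝ), ξ ≠ 0 →
        partialXi n γ σ x ξ * DxIter n γ τ x ξ
          - DxIter n γ σ x ξ * partialXi n γ τ x ξ
        = ∑ ℓ : Fin n,
            (fderiv ℝ (A ℓ x) ξ (Pi.single ℓ 1)
              + (-Complex.I) * fderiv ℝ (fun x' => B ℓ x' ξ) x (Pi.single ℓ 1))) := by
  classical
  obtain ⟨A₀, B₀, hsA, hsB, hpA, hpB, hhA, hhB, heq⟩ :=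
    Bracket.main_ind (∑ i, γ i) γ rfl a b σ τ
      hσ_smooth hσ_per hσ_homog hτ_smooth hτ_per hτ_homog
  set c : ℂ := (-Complex.I) ^ (∑ ℓ, γ ℓ) with hc_def
  have hc : c ≠ 0 := pow_ne_zero _ (neg_ne_zero.2 Complex.I_ne_zero)
  refine ⟨fun ℓ x ξ => c * A₀ ℓ x ξ, fun ℓ x ξ => c * B₀ ℓ x ξ,
    fun ℓ => Bracket.smo_cmul c (hsA ℓ), fun ℓ => Bracket.smo_cmul c (hsB ℓ),
    fun ℓ x ξ k => ⟨Bracket.perf_cmul c (hpA ℓ) x ξ k, Bracket.perf_cmul c (hpB ℓ) x ξ k⟩,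
    fun ℓ x t ht ξ hξ => Bracket.hom_cmul c (hhA ℓ) x t ht ξ hξ,
    fun ℓ x t ht ξ hξ => Bracket.hom_cmul c (hhB ℓ) x t ht ξ hξ, ?_⟩
  intro x ξ hξ
  have hDτ : DxIter n γ τ x ξ = c * partialX n γ τ x ξ := rfl
  have hDσ : DxIter n γ σ x ξ = c * partialX n γ σ x ξ := rfl
  rw [hDτ, hDσ]
  have hR : ∀ ℓ : Fin n,
      fderiv ℝ (fun ξ' => c * A₀ ℓ x ξ') ξ (Pi.single ℓ 1)
        + (-Complex.I) * fderiv ℝ (fun x' => c * B₀ ℓ x' ξ) x (Pi.single ℓ 1)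
      = c * (fderiv ℝ (A₀ ℓ x) ξ (Pi.single ℓ 1)
        + (-Complex.I) * fderiv ℝ (fun x' => B₀ ℓ x' ξ) x (Pi.single ℓ 1)) := by
    intro ℓ
    rw [Bracket.fderiv_cmul c hc (A₀ ℓ x) ξ,
      Bracket.fderiv_cmul c hc (fun x' => B₀ ℓ x' ξ) x]
    simp only [ContinuousLinearMap.smul_apply, smul_eq_mul]
    ring
  calc partialXi n γ σ x ξ * (c * partialX n γ τ x ξ)
        - c * partialX n γ σ x ξ * partialXi n γ τ x ξ
      = c * (partialXi n γ σ x ξ * partialX n γ τ x ξ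
          - partialX n γ σ x ξ * partialXi n γ τ x ξ) := by ring
    _ = c * (∑ ℓ : Fin n, (fderiv ℝ (A₀ ℓ x) ξ (Pi.single ℓ 1)
          + (-Complex.I) * fderiv ℝ (fun x' => B₀ ℓ x' ξ) x (Pi.single ℓ 1))) := by
        rw [heq x ξ hξ]
    _ = ∑ ℓ : Fin n, (fderiv ℝ (fun ξ' => c * A₀ ℓ x ξ') ξ (Pi.single ℓ 1)
          + (-Complex.I) * fderiv ℝ (fun x' => c * B₀ ℓ x' ξ) x (Pi.single ℓ 1)) := by
        rw [Finset.mul_sum]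
        exact Finset.sum_congr rfl (fun ℓ _ => (hR ℓ).symm)
end

section
/- Let n ≥ 1 and let f : ℝⁿ → ℂ be a smooth function which is 2π-periodic in each variable and satisfies ∫_{[0,2π]^n} f(x) dx = 0. Then there exist smooth functions g_1, …, g_n : ℝⁿ → ℂ, each 2π-periodic in each variable, such that f = Σ_{ℓ=1}^{n} ∂_{x_ℓ} g_ℓ. -/
open MeasureTheory Real
open scoped Convolution

/-! ### Auxiliary definitions -/

noncomputable def dirOp (n : ℕ) (ℓ : Fin n) (w : ℝ → ℝ) (F : (Fin n → ℝ) → ℂ)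
    (x : Fin n → ℝ) : ℂ :=
  ∫ s in (0:ℝ)..(2*π), w s • F (x - s • (Pi.single ℓ 1 : Fin n → ℝ))

noncomputable def dirAvg (n : ℕ) (ℓ : Fin n) (F : (Fin n → ℝ) → ℂ) (x : Fin n → ℝ) : ℂ :=
  (2*π)⁻¹ • dirOp n ℓ (fun _ => 1) F x

noncomputable def dirPrim (n : ℕ) (ℓ : Fin n) (F : (Fin n → ℝ) → ℂ) (x : Fin n → ℝ) : ℂ :=
  (2*π)⁻¹ • dirOp n ℓ (fun s => -s) F x

def IsPer {n : ℕ} (k : Fin n) (F : (Fin n → ℝ) → ℂ) : Prop :=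
  ∀ x, F (x + Pi.single k (2*π)) = F x

def IsInv {n : ℕ} (k : Fin n) (F : (Fin n → ℝ) → ℂ) : Prop :=
  ∀ (x : Fin n → ℝ) (c : ℝ), F (x + c • (Pi.single k 1 : Fin n → ℝ)) = F x

lemma single_two_pi {n : ℕ} (k : Fin n) :
    (Pi.single k (2*π) : Fin n → ℝ) = (2*π) • (Pi.single k 1 : Fin n → ℝ) := by
  ext j; by_cases h : j = k
  · subst h; simp
  · simp [Pi.single_eq_of_ne h]

/-! ### Periodicity / invariance of the directional operators -/

lemma dirOp_isPer {n : ℕ} (ℓ : Fin n) (w : ℝ → ℝ) {F : (Fin n → ℝ) → ℂ} {k : Fin n}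
    (hF : IsPer k F) : IsPer k (dirOp n ℓ w F) := by
  intro x
  unfold dirOp
  congr 1
  ext s
  congr 1
  have : x + Pi.single k (2*π) - s • (Pi.single ℓ 1 : Fin n → ℝ)
      = (x - s • (Pi.single ℓ 1 : Fin n → ℝ)) + Pi.single k (2*π) := by abel
  rw [this, hF]

lemma dirOp_isInv {n : ℕ} (ℓ : Fin n) (w : ℝ → ℝ) {F : (Fin n → ℝ) → ℂ} {k : Fin n}
    (hF : IsInv k F) : IsInv k (dirOp n ℓ w F) := by
  intro x c
  unfold dirOp
  congr 1
  ext s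
  congr 1
  have : x + c • (Pi.single k 1 : Fin n → ℝ) - s • (Pi.single ℓ 1 : Fin n → ℝ)
      = (x - s • (Pi.single ℓ 1 : Fin n → ℝ)) + c • (Pi.single k 1 : Fin n → ℝ) := by abel
  rw [this, hF]

lemma dirAvg_isPer {n : ℕ} (ℓ : Fin n) {F : (Fin n → ℝ) → ℂ} {k : Fin n}
    (hF : IsPer k F) : IsPer k (dirAvg n ℓ F) := fun x =>
  congrArg (fun z => (2*π)⁻¹ • z) (dirOp_isPer ℓ _ hF x)

lemma dirPrim_isPer {n : ℕ} (ℓ : Fin n) {F : (Fin n → ℝ) → ℂ} {k : Fin n}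
    (hF : IsPer k F) : IsPer k (dirPrim n ℓ F) := fun x =>
  congrArg (fun z => (2*π)⁻¹ • z) (dirOp_isPer ℓ _ hF x)

lemma dirAvg_isInv_of_isInv {n : ℕ} (ℓ : Fin n) {F : (Fin n → ℝ) → ℂ} {k : Fin n}
    (hF : IsInv k F) : IsInv k (dirAvg n ℓ F) := fun x c =>
  congrArg (fun z => (2*π)⁻¹ • z) (dirOp_isInv ℓ _ hF x c)

lemma per_line {n : ℕ} {ℓ : Fin n} {F : (Fin n → ℝ) → ℂ} (hF : IsPer ℓ F) (x : Fin n → ℝ) :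
    Function.Periodic (fun s : ℝ => F (x - s • (Pi.single ℓ 1 : Fin n → ℝ))) (2*π) := by
  intro s
  simp only
  have : x - (s + 2*π) • (Pi.single ℓ 1 : Fin n → ℝ)
      = (x - s • (Pi.single ℓ 1 : Fin n → ℝ) - Pi.single ℓ (2*π)) := by
    rw [single_two_pi, add_smul]; abel
  rw [this]
  have h2 := hF (x - s • (Pi.single ℓ 1 : Fin n → ℝ) - Pi.single ℓ (2*π))
  have h3 : x - s • (Pi.single ℓ 1 : Fin n → ℝ) - Pi.single ℓ (2*π) + Pi.single ℓ (2*π)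
      = x - s • (Pi.single ℓ 1 : Fin n → ℝ) := by abel
  rw [h3] at h2
  exact h2.symm

lemma dirAvg_isInv {n : ℕ} (ℓ : Fin n) {F : (Fin n → ℝ) → ℂ}
    (hF : IsPer ℓ F) : IsInv ℓ (dirAvg n ℓ F) := by
  intro x c
  unfold dirAvg dirOp
  congr 1
  simp only [one_smul]
  have h1 : ∀ s : ℝ, x + c • (Pi.single ℓ 1 : Fin n → ℝ) - s • (Pi.single ℓ 1 : Fin n → ℝ)
      = x - (s - c) • (Pi.single ℓ 1 : Fin n → ℝ) := by
    intro s; rw [sub_smul]; abel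
  calc ∫ s in (0:ℝ)..(2*π), F (x + c • (Pi.single ℓ 1 : Fin n → ℝ) - s • (Pi.single ℓ 1 : Fin n → ℝ))
      = ∫ s in (0:ℝ)..(2*π), F (x - (s - c) • (Pi.single ℓ 1 : Fin n → ℝ)) := by
        apply intervalIntegral.integral_congr; intro s _; simp only []; rw [h1]
    _ = ∫ s in (0-c)..(2*π-c), F (x - s • (Pi.single ℓ 1 : Fin n → ℝ)) := by
        rw [← intervalIntegral.integral_comp_sub_right
          (fun s => F (x - s • (Pi.single ℓ 1 : Fin n → ℝ))) c]
    _ = ∫ s in (0:ℝ)..(2*π), F (x - s • (Pi.single ℓ 1 : Fin n → ℝ)) := by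
        have hp := per_line hF x
        have := hp.intervalIntegral_add_eq (0-c) 0
        rw [zero_add] at this
        rw [show (2*π - c) = 0 - c + 2*π by ring, this]

/-! ### Smoothness of the directional operators -/

noncomputable def lineMeasure (n : ℕ) (ℓ : Fin n) : Measure (Fin n → ℝ) :=
  Measure.map (fun s : ℝ => s • (Pi.single ℓ 1 : Fin n → ℝ))
    (volume.restrict (Set.Ioc 0 (2*π)))

instance (n : ℕ) (ℓ : Fin n) : IsFiniteMeasure (lineMeasure n ℓ) := by
  constructor
  rw [lineMeasure, Measure.map_apply (by fun_prop) MeasurableSet.univ]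
  simp [Real.volume_Ioc]
  exact ENNReal.mul_lt_top (by simp) ENNReal.ofReal_lt_top

lemma conv_eq (n : ℕ) (ℓ : Fin n) (w : ℝ → ℝ) (hw : Continuous w)
    (K : (Fin n → ℝ) → ℂ) (hK : Continuous K) (x : Fin n → ℝ) :
    ((fun y => w (y ℓ)) ⋆[ContinuousLinearMap.lsmul ℝ ℝ, lineMeasure n ℓ] K) x
      = ∫ s in (0:ℝ)..(2*π), w s • K (x - s • (Pi.single ℓ 1 : Fin n → ℝ)) := by
  rw [intervalIntegral.integral_of_le (by positivity), convolution]
  rw [lineMeasure, integral_map (by fun_prop) ?_]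
  · apply MeasureTheory.integral_congr_ae
    filter_upwards with s
    simp
  · apply Continuous.aestronglyMeasurable
    have : Continuous fun t : Fin n → ℝ => w (t ℓ) • K (x - t) := by
      apply Continuous.smul (hw.comp (continuous_apply ℓ))
      exact hK.comp (continuous_const.sub continuous_id)
    simpa [ContinuousLinearMap.lsmul_apply] using this

lemma dirOp_contDiff (n : ℕ) (ℓ : Fin n) (w : ℝ → ℝ) (hw : Continuous w)
    {F : (Fin n → ℝ) → ℂ} (hF : ContDiff ℝ (⊤:ℕ∞) F) :
    ContDiff ℝ (⊤:ℕ∞) (dirOp n ℓ w F) := by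
  rw [contDiff_iff_contDiffAt]
  intro x₀
  set e : Fin n → ℝ := (Pi.single ℓ 1 : Fin n → ℝ) with he
  set r : ℝ := ‖x₀‖ + 1 + 2*π*‖e‖ with hr
  have hrpos : 0 < r + 1 := by positivity
  let χ : ContDiffBump (0 : Fin n → ℝ) := ⟨r+1, r+2, hrpos, by linarith⟩
  set K : (Fin n → ℝ) → ℂ := fun y => χ y • F y with hKdef
  have hKsm : ContDiff ℝ (⊤:ℕ∞) K := χ.contDiff.smul hF
  have hKsupp : HasCompactSupport K := by
    apply HasCompactSupport.smul_right χ.hasCompactSupport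
  have hconv : ContDiff ℝ (⊤:ℕ∞)
      ((fun y => w (y ℓ)) ⋆[ContinuousLinearMap.lsmul ℝ ℝ, lineMeasure n ℓ] K) := by
    apply HasCompactSupport.contDiff_convolution_right _ hKsupp _ hKsm
    exact (hw.comp (continuous_apply ℓ)).locallyIntegrable
  apply hconv.contDiffAt.congr_of_eventuallyEq
  have hball : Metric.ball x₀ 1 ∈ nhds x₀ := Metric.ball_mem_nhds x₀ one_pos
  filter_upwards [hball] with x hx
  rw [dirOp, conv_eq n ℓ w hw K hKsm.continuous x]
  apply intervalIntegral.integral_congr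
  intro s hs
  rw [Set.uIcc_of_le (by positivity)] at hs
  have hs0 : 0 ≤ s := hs.1
  have hs2 : s ≤ 2*π := hs.2
  have hxx : ‖x - s • e‖ ≤ r := by
    have h1 : ‖x - s • e‖ ≤ ‖x - x₀‖ + ‖x₀‖ + ‖s • e‖ := by
      have : x - s • e = (x - x₀) + x₀ + (-(s • e)) := by abel
      rw [this]
      refine le_trans (norm_add_le _ _) ?_
      simp only [norm_neg]
      exact add_le_add (norm_add_le _ _) le_rfl
    have h2 : ‖s • e‖ ≤ 2*π*‖e‖ := by
      rw [norm_smul, Real.norm_eq_abs, abs_of_nonneg hs0]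
      exact mul_le_mul_of_nonneg_right hs2 (norm_nonneg _)
    have h3 : ‖x - x₀‖ ≤ 1 := le_of_lt (by simpa [dist_eq_norm] using hx)
    rw [hr]; linarith
  have hone : χ (x - s • e) = 1 := by
    apply χ.one_of_mem_closedBall
    simp only [Metric.mem_closedBall, dist_zero_right]
    change ‖x - s • e‖ ≤ r + 1
    linarith
  rw [he] at hone
  simp only [hKdef, hone, one_smul]

lemma dirAvg_contDiff (n : ℕ) (ℓ : Fin n) {F : (Fin n → ℝ) → ℂ}
    (hF : ContDiff ℝ (⊤:ℕ∞) F) : ContDiff ℝ (⊤:ℕ∞) (dirAvg n ℓ F) :=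
  (dirOp_contDiff n ℓ _ continuous_const hF).const_smul ((2*π)⁻¹ : ℝ)

lemma dirPrim_contDiff (n : ℕ) (ℓ : Fin n) {F : (Fin n → ℝ) → ℂ}
    (hF : ContDiff ℝ (⊤:ℕ∞) F) : ContDiff ℝ (⊤:ℕ∞) (dirPrim n ℓ F) :=
  (dirOp_contDiff n ℓ _ (continuous_id.neg) hF).const_smul ((2*π)⁻¹ : ℝ)

/-! ### The derivative identity -/

lemma dirPrim_hasDerivAt (n : ℕ) (ℓ : Fin n) {F : (Fin n → ℝ) → ℂ}
    (hFc : Continuous F) (hper : IsPer ℓ F) (x : Fin n → ℝ)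
    (hdiff : DifferentiableAt ℝ (dirPrim n ℓ F) x) :
    fderiv ℝ (dirPrim n ℓ F) x (Pi.single ℓ 1) = F x - dirAvg n ℓ F x := by
  set e : Fin n → ℝ := (Pi.single ℓ 1 : Fin n → ℝ) with he
  set c : ℝ → ℂ := fun t => F (x + t • e) with hc_def
  have hc : Continuous c := hFc.comp (continuous_const.add (continuous_id.smul continuous_const))
  set q : ℝ → ℂ := fun t => t • c t with hq_def
  have hq : Continuous q := continuous_id.smul hc
  set C : ℝ → ℂ := fun u => ∫ t in (0:ℝ)..u, c t with hC_def
  set Q : ℝ → ℂ := fun u => ∫ t in (0:ℝ)..u, q t with hQ_def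
  have hC : ∀ u, HasDerivAt C (c u) u := fun u =>
    intervalIntegral.integral_hasDerivAt_right (hc.intervalIntegrable 0 u)
      (hc.stronglyMeasurableAtFilter _ _) hc.continuousAt
  have hQ : ∀ u, HasDerivAt Q (q u) u := fun u =>
    intervalIntegral.integral_hasDerivAt_right (hq.intervalIntegrable 0 u)
      (hq.stronglyMeasurableAtFilter _ _) hq.continuousAt
  -- key pointwise identity
  have key : ∀ ε : ℝ, dirPrim n ℓ F (x + ε • e)
      = (2*π)⁻¹ • ((Q ε - Q (ε - 2*π)) - ε • (C ε - C (ε - 2*π))) := by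
    intro ε
    rw [dirPrim, dirOp]
    congr 1
    have step1 : ∀ s : ℝ, (-s) • F (x + ε • e - s • e) = q (ε - s) - ε • c (ε - s) := by
      intro s
      have h1 : x + ε • e - s • e = x + (ε - s) • e := by rw [sub_smul]; abel
      rw [h1, hq_def]
      simp only [hc_def]
      rw [show (-s : ℝ) = (ε - s) - ε by ring, sub_smul]
    calc (∫ s in (0:ℝ)..(2*π), (-s) • F (x + ε • e - s • e))
        = ∫ s in (0:ℝ)..(2*π), (q (ε - s) - ε • c (ε - s)) := by
          apply intervalIntegral.integral_congr
          intro s _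
          exact step1 s
      _ = (∫ s in (0:ℝ)..(2*π), q (ε - s)) - ε • ∫ s in (0:ℝ)..(2*π), c (ε - s) := by
          rw [intervalIntegral.integral_sub, intervalIntegral.integral_smul]
          · exact (hq.comp (continuous_const.sub continuous_id)).intervalIntegrable 0 (2*π)
          · exact ((hc.comp (continuous_const.sub continuous_id)).intervalIntegrable 0 (2*π)).smul ε
      _ = (∫ t in (ε - 2*π)..(ε - 0), q t) - ε • ∫ t in (ε - 2*π)..(ε - 0), c t := by
          rw [intervalIntegral.integral_comp_sub_left q ε, intervalIntegral.integral_comp_sub_left c ε]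
      _ = (Q ε - Q (ε - 2*π)) - ε • (C ε - C (ε - 2*π)) := by
          rw [sub_zero]
          rw [← intervalIntegral.integral_interval_sub_left (hq.intervalIntegrable 0 ε)
              (hq.intervalIntegrable 0 (ε - 2*π)),
            ← intervalIntegral.integral_interval_sub_left (hc.intervalIntegrable 0 ε)
              (hc.intervalIntegrable 0 (ε - 2*π))]
  -- derivative of RHS at 0
  have hQ2 : HasDerivAt (fun ε : ℝ => Q (ε - 2*π)) (q (-(2*π))) 0 := by
    have := (hQ ((0:ℝ) - 2*π)).scomp (0:ℝ) ((hasDerivAt_id (0:ℝ)).sub_const (2*π))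
    exact this.congr_deriv (by simp)
  have hC2 : HasDerivAt (fun ε : ℝ => C (ε - 2*π)) (c (-(2*π))) 0 := by
    have := (hC ((0:ℝ) - 2*π)).scomp (0:ℝ) ((hasDerivAt_id (0:ℝ)).sub_const (2*π))
    exact this.congr_deriv (by simp)
  have hprod : HasDerivAt (fun ε : ℝ => ε • (C ε - C (ε - 2*π)))
      ((1:ℝ) • (C 0 - C (0 - 2*π)) + (0:ℝ) • (c 0 - c (-(2*π)))) 0 := by
    have h0 : HasDerivAt (fun ε : ℝ => ε) (1:ℝ) 0 := hasDerivAt_id 0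
    have := h0.smul ((hC 0).sub hC2)
    exact this.congr_deriv (by simp)
  have hrhs : HasDerivAt (fun ε : ℝ => (Q ε - Q (ε - 2*π)) - ε • (C ε - C (ε - 2*π)))
      ((q 0 - q (-(2*π))) - ((1:ℝ) • (C 0 - C (0 - 2*π)) + (0:ℝ) • (c 0 - c (-(2*π))))) 0 := by
    have h1 := (hQ 0).sub hQ2
    have := h1.sub hprod
    exact this
  -- simplify the derivative value
  have hcval : c (-(2*π)) = F x := by
    have h1 := hper (x + (-(2*π)) • e)
    have h2 : x + (-(2*π)) • e + Pi.single ℓ (2*π) = x := by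
      rw [single_two_pi, ← he, neg_smul]; abel
    rw [h2] at h1
    exact h1.symm
  have hd : (q 0 - q (-(2*π))) - ((1:ℝ) • (C 0 - C (0 - 2*π)) + (0:ℝ) • (c 0 - c (-(2*π))))
      = (2*π) • F x + C (0 - 2*π) := by
    simp only [hq_def, zero_smul, one_smul, hcval]
    simp only [hC_def, intervalIntegral.integral_same]
    simp only [neg_smul]
    abel
  have havg : dirAvg n ℓ F x = (2*π)⁻¹ • (- C (0 - 2*π)) := by
    rw [dirAvg, dirOp]
    congr 1
    have h1 : ∀ s : ℝ, (1:ℝ) • F (x - s • e) = c (-s) := by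
      intro s
      have h2 : x - s • e = x + (-s) • e := by rw [neg_smul]; abel
      simp only [hc_def, one_smul, h2]
    rw [intervalIntegral.integral_congr (fun s _ => h1 s), intervalIntegral.integral_comp_neg]
    rw [hC_def]
    simp only [neg_zero]
    rw [intervalIntegral.integral_symm]
    norm_num
  -- combine
  have hγ : HasDerivAt (fun ε : ℝ => x + ε • e) e 0 := by
    have := ((hasDerivAt_id (0:ℝ)).smul_const e).const_add x
    simpa using this
  have hfd : HasFDerivAt (dirPrim n ℓ F) (fderiv ℝ (dirPrim n ℓ F) x) x := hdiff.hasFDerivAt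
  have hx0 : x + (0:ℝ) • e = x := by simp
  have hcomp : HasDerivAt (fun ε : ℝ => dirPrim n ℓ F (x + ε • e))
      (fderiv ℝ (dirPrim n ℓ F) x e) 0 := by
    have := hfd.comp_hasDerivAt_of_eq (0:ℝ) hγ hx0.symm
    exact this
  have hrhs2 : HasDerivAt (fun ε : ℝ => dirPrim n ℓ F (x + ε • e))
      ((2*π)⁻¹ • ((2*π) • F x + C (0 - 2*π))) 0 := by
    have h2 := (hrhs.const_smul ((2*π)⁻¹ : ℝ))
    rw [hd] at h2
    have hfun : (fun ε : ℝ => dirPrim n ℓ F (x + ε • e))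
        = fun ε : ℝ => (2*π)⁻¹ • ((Q ε - Q (ε - 2*π)) - ε • (C ε - C (ε - 2*π))) := funext key
    rw [hfun]
    exact h2
  have huniq := hcomp.unique hrhs2
  rw [he] at huniq
  rw [huniq, havg]
  have hpi : ((2*π)⁻¹ : ℝ) • ((2*π) : ℝ) • F x = F x := by
    rw [smul_smul, inv_mul_cancel₀ (by positivity : (2*π : ℝ) ≠ 0), one_smul]
  rw [smul_add, hpi, smul_neg, sub_neg_eq_add]

/-! ### Measure lemmas -/

lemma pi_restrict_eq (m : ℕ) :
    Measure.pi (fun _ : Fin m => volume.restrict (Set.Ioc (0:ℝ) (2*π)))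
      = volume.restrict (Set.pi Set.univ fun _ : Fin m => Set.Ioc (0:ℝ) (2*π)) := by
  apply Measure.pi_eq
  intro s hs
  rw [Measure.restrict_apply (MeasurableSet.univ_pi hs)]
  rw [← Set.pi_inter_distrib]
  rw [MeasureTheory.volume_pi_pi]
  congr 1
  ext i
  rw [Measure.restrict_apply (hs i)]

lemma restrict_box_eq (m : ℕ) :
    volume.restrict (Set.Icc (0 : Fin m → ℝ) (fun _ => 2*π))
      = Measure.pi (fun _ : Fin m => volume.restrict (Set.Ioc (0:ℝ) (2*π))) := by
  rw [pi_restrict_eq]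
  apply Measure.restrict_congr_set
  rw [MeasureTheory.volume_pi]
  exact (Measure.univ_pi_Ioc_ae_eq_Icc (α := fun _ : Fin m => ℝ) (μ := fun _ => volume) (f := fun _ => 0) (g := fun _ => 2*π)).symm

lemma split_integral (m : ℕ) (ℓ : Fin (m+1)) (H : (Fin (m+1) → ℝ) → ℂ) (hH : Continuous H) :
    ∫ x in Set.Icc (0 : Fin (m+1) → ℝ) (fun _ => 2*π), H x
      = ∫ t in Set.Ioc (0:ℝ) (2*π),
          (∫ y in Set.Icc (0 : Fin m → ℝ) (fun _ => 2*π), H (Fin.insertNth ℓ t y)) := by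
  have h2pi : (0:ℝ) ≤ 2*π := by positivity
  set ν₀ : Measure ℝ := volume.restrict (Set.Ioc (0:ℝ) (2*π)) with hν₀
  set νm : Measure (Fin m → ℝ) := Measure.pi (fun _ : Fin m => ν₀) with hνm
  have e := MeasurableEquiv.piFinSuccAbove (fun _ : Fin (m+1) => ℝ) ℓ
  have hmp : MeasurePreserving (MeasurableEquiv.piFinSuccAbove (fun _ : Fin (m+1) => ℝ) ℓ)
      (Measure.pi (fun _ => ν₀)) (ν₀.prod νm) :=
    measurePreserving_piFinSuccAbove (fun _ : Fin (m+1) => ν₀) ℓ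
  have hmp' := hmp.symm (MeasurableEquiv.piFinSuccAbove (fun _ : Fin (m+1) => ℝ) ℓ)
  -- ∫ over box = ∫ over pi measure
  rw [restrict_box_eq (m+1)]
  -- compose with equiv
  have hcomp := hmp'.integral_comp'
    (f := (MeasurableEquiv.piFinSuccAbove (fun _ : Fin (m+1) => ℝ) ℓ).symm) H
  rw [← hcomp]
  -- now a product integral
  have hins : ∀ p : ℝ × (Fin m → ℝ),
      (MeasurableEquiv.piFinSuccAbove (fun _ : Fin (m+1) => ℝ) ℓ).symm p
        = Fin.insertNth ℓ p.1 p.2 := by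
    intro p; rfl
  have hint : Integrable (fun p : ℝ × (Fin m → ℝ) => H (Fin.insertNth ℓ p.1 p.2)) (ν₀.prod νm) := by
    have hprodeq : ν₀.prod νm
        = (volume.prod volume).restrict ((Set.Ioc (0:ℝ) (2*π)) ×ˢ
            (Set.pi Set.univ fun _ : Fin m => Set.Ioc (0:ℝ) (2*π))) := by
      rw [hνm, pi_restrict_eq, hν₀, Measure.prod_restrict]
    rw [hprodeq]
    apply MeasureTheory.IntegrableOn.mono_set
      (t := (Set.Icc (0:ℝ) (2*π)) ×ˢ (Set.Icc (0 : Fin m → ℝ) (fun _ => 2*π)))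
    · apply ContinuousOn.integrableOn_compact
      · exact (isCompact_Icc).prod (isCompact_Icc)
      · exact (hH.comp ((continuous_fst).finInsertNth ℓ continuous_snd)).continuousOn
    · intro p hp
      refine ⟨Set.Ioc_subset_Icc_self hp.1, ?_⟩
      rw [← Set.pi_univ_Icc]
      intro i _
      exact Set.Ioc_subset_Icc_self (hp.2 i trivial)
  have := MeasureTheory.integral_prod (μ := ν₀) (ν := νm)
    (fun p : ℝ × (Fin m → ℝ) => H (Fin.insertNth ℓ p.1 p.2)) hint
  simp only [hins]
  rw [this]
  rw [hν₀]
  apply setIntegral_congr_fun measurableSet_Ioc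
  intro t _
  rw [restrict_box_eq m]


lemma insertNth_add_smul_single {m : ℕ} (ℓ : Fin (m+1)) (a c : ℝ) (y : Fin m → ℝ) :
    Fin.insertNth ℓ a y + c • (Pi.single ℓ 1 : Fin (m+1) → ℝ) = Fin.insertNth ℓ (a + c) y := by
  ext j
  refine Fin.succAboveCases ℓ ?_ ?_ j
  · simp
  · intro j'
    simp [Pi.single_eq_of_ne (Fin.succAbove_ne ℓ j')]

lemma const_of_isInv {n : ℕ} {F : (Fin n → ℝ) → ℂ} (h : ∀ k, IsInv k F) (x : Fin n → ℝ) :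
    F x = F 0 := by
  have key : ∀ s : Finset (Fin n), F (∑ k ∈ s, Pi.single k (x k)) = F 0 := by
    intro s
    induction s using Finset.induction_on with
    | empty => simp
    | @insert j s' hj ih =>
      rw [Finset.sum_insert hj]
      have hsingle : (Pi.single j (x j) : Fin n → ℝ) = x j • (Pi.single j 1 : Fin n → ℝ) := by
        ext i; by_cases hij : i = j
        · subst hij; simp
        · simp [Pi.single_eq_of_ne hij]
      rw [hsingle, add_comm, h j _ (x j), ih]
  have hx : x = ∑ k : Fin n, Pi.single k (x k) := (Finset.univ_sum_single x).symm
  calc F x = F (∑ k : Fin n, Pi.single k (x k)) := by rw [← hx]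
    _ = F 0 := key Finset.univ

lemma avg_integral (m : ℕ) (ℓ : Fin (m+1)) {F : (Fin (m+1) → ℝ) → ℂ}
    (hFc : Continuous F) (hAc : Continuous (dirAvg (m+1) ℓ F)) (hper : IsPer ℓ F) :
    ∫ x in Set.Icc (0 : Fin (m+1) → ℝ) (fun _ => 2*π), dirAvg (m+1) ℓ F x
      = ∫ x in Set.Icc (0 : Fin (m+1) → ℝ) (fun _ => 2*π), F x := by
  have h2pi : (0:ℝ) ≤ 2*π := by positivity
  have hinv : IsInv ℓ (dirAvg (m+1) ℓ F) := dirAvg_isInv ℓ hper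
  rw [split_integral m ℓ _ hAc, split_integral m ℓ F hFc]
  -- rewrite inner: dirAvg at insertNth t y is indep of t and equals (2π)⁻¹ ∫ F(insert s y) ds
  have hAval : ∀ (t : ℝ) (y : Fin m → ℝ), dirAvg (m+1) ℓ F (Fin.insertNth ℓ t y)
      = (2*π)⁻¹ • ∫ s in Set.Ioc (0:ℝ) (2*π), F (Fin.insertNth ℓ s y) := by
    intro t y
    have h1 : Fin.insertNth ℓ t y = Fin.insertNth ℓ 0 y + t • (Pi.single ℓ 1 : Fin (m+1) → ℝ) := by
      rw [insertNth_add_smul_single, zero_add]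
    rw [h1, hinv]
    rw [dirAvg, dirOp]
    congr 1
    have h2 : ∀ s : ℝ, (1:ℝ) • F (Fin.insertNth ℓ 0 y - s • (Pi.single ℓ 1 : Fin (m+1) → ℝ))
        = F (Fin.insertNth ℓ (-s) y) := by
      intro s
      rw [one_smul]
      congr 1
      have hh := insertNth_add_smul_single ℓ 0 (-s) y
      rw [zero_add] at hh
      rw [← hh, neg_smul]
      abel
    rw [intervalIntegral.integral_congr (fun s _ => h2 s)]
    have hper' : Function.Periodic (fun u : ℝ => F (Fin.insertNth ℓ u y)) (2*π) := by
      intro u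
      simp only
      rw [← insertNth_add_smul_single ℓ u (2*π) y]
      have : (2*π) • (Pi.single ℓ 1 : Fin (m+1) → ℝ) = Pi.single ℓ (2*π) := by
        ext i; by_cases hij : i = ℓ
        · subst hij; simp
        · simp [Pi.single_eq_of_ne hij]
      rw [this, hper]
    calc (∫ s in (0:ℝ)..(2*π), F (Fin.insertNth ℓ (-s) y))
        = ∫ u in (-(2*π))..(-0:ℝ), F (Fin.insertNth ℓ u y) := by
          rw [intervalIntegral.integral_comp_neg (fun u => F (Fin.insertNth ℓ u y))]
      _ = ∫ u in (-(2*π))..(-(2*π)+2*π), F (Fin.insertNth ℓ u y) := by norm_num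
      _ = ∫ u in (0:ℝ)..(0+2*π), F (Fin.insertNth ℓ u y) := hper'.intervalIntegral_add_eq (-(2*π)) 0
      _ = ∫ s in Set.Ioc (0:ℝ) (2*π), F (Fin.insertNth ℓ s y) := by
          rw [zero_add, intervalIntegral.integral_of_le h2pi]
  -- LHS: integrate constant in t
  have hswap : ∫ t in Set.Ioc (0:ℝ) (2*π),
      (∫ y in Set.Icc (0 : Fin m → ℝ) (fun _ => 2*π), F (Fin.insertNth ℓ t y))
      = ∫ y in Set.Icc (0 : Fin m → ℝ) (fun _ => 2*π),
          (∫ t in Set.Ioc (0:ℝ) (2*π), F (Fin.insertNth ℓ t y)) := by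
    apply MeasureTheory.integral_integral_swap
    -- integrability
    have hprodeq : (volume.restrict (Set.Ioc (0:ℝ) (2*π))).prod
        (volume.restrict (Set.Icc (0 : Fin m → ℝ) (fun _ => 2*π)))
        = (volume.prod volume).restrict ((Set.Ioc (0:ℝ) (2*π)) ×ˢ
            (Set.Icc (0 : Fin m → ℝ) (fun _ => 2*π))) := by
      rw [Measure.prod_restrict]
    rw [Function.uncurry_def, hprodeq]
    apply MeasureTheory.IntegrableOn.mono_set
      (t := (Set.Icc (0:ℝ) (2*π)) ×ˢ (Set.Icc (0 : Fin m → ℝ) (fun _ => 2*π)))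
    · apply ContinuousOn.integrableOn_compact
      · exact (isCompact_Icc).prod (isCompact_Icc)
      · exact (hFc.comp ((continuous_fst).finInsertNth ℓ continuous_snd)).continuousOn
    · exact Set.prod_mono_left Set.Ioc_subset_Icc_self
  rw [hswap]
  calc ∫ t in Set.Ioc (0:ℝ) (2*π),
        (∫ y in Set.Icc (0 : Fin m → ℝ) (fun _ => 2*π), dirAvg (m+1) ℓ F (Fin.insertNth ℓ t y))
      = ∫ _t in Set.Ioc (0:ℝ) (2*π),
        (∫ y in Set.Icc (0 : Fin m → ℝ) (fun _ => 2*π),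
          (2*π)⁻¹ • ∫ s in Set.Ioc (0:ℝ) (2*π), F (Fin.insertNth ℓ s y)) := by
        apply setIntegral_congr_fun measurableSet_Ioc
        intro t _
        apply MeasureTheory.integral_congr_ae
        filter_upwards with y
        rw [hAval t y]
    _ = ((volume (Set.Ioc (0:ℝ) (2*π))).toReal : ℝ) •
          ∫ y in Set.Icc (0 : Fin m → ℝ) (fun _ => 2*π),
            (2*π)⁻¹ • ∫ s in Set.Ioc (0:ℝ) (2*π), F (Fin.insertNth ℓ s y) := by
        rw [MeasureTheory.integral_const]
        simp [Measure.restrict_apply, Real.pi_pos.le, ENNReal.toReal_ofReal, max_eq_left h2pi]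
    _ = ∫ y in Set.Icc (0 : Fin m → ℝ) (fun _ => 2*π),
          (∫ t in Set.Ioc (0:ℝ) (2*π), F (Fin.insertNth ℓ t y)) := by
        rw [Real.volume_Ioc, ← MeasureTheory.integral_smul]
        apply MeasureTheory.integral_congr_ae
        filter_upwards with y
        rw [smul_smul, sub_zero, ENNReal.toReal_ofReal h2pi]
        rw [mul_inv_cancel₀ (by positivity : (2*π:ℝ) ≠ 0), one_smul]

/-! ### Iterated averages -/

noncomputable def iterAvg (n : ℕ) (f : (Fin n → ℝ) → ℂ) : ℕ → ((Fin n → ℝ) → ℂ)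
  | 0 => f
  | (j+1) => if h : j < n then dirAvg n ⟨j, h⟩ (iterAvg n f j) else iterAvg n f j

lemma iterAvg_contDiff (n : ℕ) {f : (Fin n → ℝ) → ℂ} (hf : ContDiff ℝ (⊤:ℕ∞) f) (j : ℕ) :
    ContDiff ℝ (⊤:ℕ∞) (iterAvg n f j) := by
  induction j with
  | zero => exact hf
  | succ j ih =>
    rw [iterAvg]
    split
    · exact dirAvg_contDiff n _ ih
    · exact ih

lemma iterAvg_isPer (n : ℕ) {f : (Fin n → ℝ) → ℂ} (hf : ∀ k : Fin n, IsPer k f)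
    (j : ℕ) (k : Fin n) : IsPer k (iterAvg n f j) := by
  induction j with
  | zero => exact hf k
  | succ j ih =>
    rw [iterAvg]
    split
    · exact dirAvg_isPer _ ih
    · exact ih

lemma iterAvg_isInv (n : ℕ) {f : (Fin n → ℝ) → ℂ} (hf : ∀ k : Fin n, IsPer k f)
    (j : ℕ) (k : Fin n) (hk : (k : ℕ) < j) : IsInv k (iterAvg n f j) := by
  induction j with
  | zero => omega
  | succ j ih =>
    rw [iterAvg]
    split
    · rename_i h
      rcases Nat.lt_or_ge (k : ℕ) j with hkj | hkj
      · exact dirAvg_isInv_of_isInv _ (ih hkj)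
      · have hkeq : k = (⟨j, h⟩ : Fin n) := by
          apply Fin.ext
          simp only []
          omega
        rw [hkeq]
        exact dirAvg_isInv _ (iterAvg_isPer n hf j _)
    · rename_i h
      have hkn : (k : ℕ) < n := k.isLt
      exact ih (by omega)

/-- Let `n ≥ 1` and let `f : ℝⁿ → ℂ` be smooth, `2π`-periodic in each variable,
with `∫_{[0,2π]^n} f(x) dx = 0`. Then there exist smooth `2π`-periodic functions
`g_1, …, g_n : ℝⁿ → ℂ` such that `f = Σ_{ℓ=1}^{n} ∂_{x_ℓ} g_ℓ`. -/
theorem periodic_mean_zero_eq_sum_derivs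
    (n : ℕ) (hn : 1 ≤ n) (f : (Fin n → ℝ) → ℂ)
    (hf_smooth : ContDiff ℝ (⊤ : ℕ∞) f)
    (hf_per : ∀ (x : Fin n → ℝ) (ℓ : Fin n), f (x + Pi.single ℓ (2 * π)) = f x)
    (hf_int : ∫ x in Set.Icc (0 : Fin n → ℝ) (fun _ => 2 * π), f x = 0) :
    ∃ g : Fin n → (Fin n → ℝ) → ℂ,
      (∀ ℓ, ContDiff ℝ (⊤ : ℕ∞) (g ℓ)) ∧
      (∀ ℓ (x : Fin n → ℝ) (k : Fin n), g ℓ (x + Pi.single k (2 * π)) = g ℓ x) ∧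
      (∀ x : Fin n → ℝ, f x = ∑ ℓ : Fin n, fderiv ℝ (g ℓ) x (Pi.single ℓ 1)) := by
  obtain ⟨m, rfl⟩ : ∃ m, n = m + 1 := ⟨n - 1, (Nat.succ_pred_eq_of_pos hn).symm⟩
  have hfper' : ∀ k : Fin (m+1), IsPer k f := fun k x => hf_per x k
  -- all iterates have integral zero over the box
  have hint : ∀ j, ∫ x in Set.Icc (0 : Fin (m+1) → ℝ) (fun _ => 2*π), iterAvg (m+1) f j x = 0 := by
    intro j
    induction j with
    | zero => exact hf_int
    | succ j ih =>
      rw [iterAvg]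
      split
      · rename_i h
        rw [avg_integral m ⟨j, h⟩ (iterAvg_contDiff (m+1) hf_smooth j).continuous
          (dirAvg_contDiff (m+1) _ (iterAvg_contDiff (m+1) hf_smooth j)).continuous
          (iterAvg_isPer (m+1) hfper' j _)]
        exact ih
      · exact ih
  -- the final iterate is identically zero
  have hfinal : ∀ x, iterAvg (m+1) f (m+1) x = 0 := by
    have hconst : ∀ x, iterAvg (m+1) f (m+1) x = iterAvg (m+1) f (m+1) 0 := by
      intro x
      exact const_of_isInv (fun k => iterAvg_isInv (m+1) hfper' (m+1) k k.isLt) x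
    have hzero : iterAvg (m+1) f (m+1) 0 = 0 := by
      have h1 := hint (m+1)
      rw [MeasureTheory.setIntegral_congr_fun measurableSet_Icc
        (fun x _ => hconst x)] at h1
      rw [MeasureTheory.setIntegral_const] at h1
      have hvol : (volume (Set.Icc (0 : Fin (m+1) → ℝ) (fun _ => 2*π))).toReal
          = (2*π)^(m+1) := by
        rw [Real.volume_Icc_pi_toReal (fun i => by positivity)]
        simp [Finset.prod_const]
      rw [measureReal_def, hvol] at h1
      have hne : ((2*π : ℝ)^(m+1)) ≠ 0 := by positivity
      exact (smul_eq_zero.mp h1).resolve_left hne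
    intro x; rw [hconst x, hzero]
  -- the candidate functions
  refine ⟨fun ℓ => dirPrim (m+1) ℓ (iterAvg (m+1) f ℓ), ?_, ?_, ?_⟩
  · intro ℓ
    exact dirPrim_contDiff (m+1) ℓ (iterAvg_contDiff (m+1) hf_smooth ℓ)
  · intro ℓ x k
    exact dirPrim_isPer ℓ (iterAvg_isPer (m+1) hfper' ℓ k) x
  · intro x
    have hterm : ∀ ℓ : Fin (m+1),
        fderiv ℝ (dirPrim (m+1) ℓ (iterAvg (m+1) f ℓ)) x (Pi.single ℓ 1)
          = iterAvg (m+1) f ℓ x - iterAvg (m+1) f (ℓ+1) x := by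
      intro ℓ
      have hd := dirPrim_hasDerivAt (m+1) ℓ
        (iterAvg_contDiff (m+1) hf_smooth ℓ).continuous
        (iterAvg_isPer (m+1) hfper' ℓ ℓ) x
        ((dirPrim_contDiff (m+1) ℓ (iterAvg_contDiff (m+1) hf_smooth ℓ)).differentiable
          (by simp) x)
      rw [hd]
      congr 1
      rw [iterAvg, dif_pos ℓ.isLt]
    rw [Finset.sum_congr rfl (fun ℓ _ => hterm ℓ)]
    have htel : ∑ ℓ : Fin (m+1), (iterAvg (m+1) f ℓ x - iterAvg (m+1) f (ℓ+1) x)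
        = iterAvg (m+1) f 0 x - iterAvg (m+1) f (m+1) x := by
      rw [Fin.sum_univ_eq_sum_range (fun j => iterAvg (m+1) f j x - iterAvg (m+1) f (j+1) x)]
      exact Finset.sum_range_sub' (fun j => iterAvg (m+1) f j x) (m+1)
    rw [htel, hfinal x, sub_zero]
    rfl
end
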